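/- arXiv:2510.11625 — 7 statements merged into one kernel-verified Lean document; each statement's English description precedes it below -/
import Mathlib

section
/- Let E=(V,C,k,A) be an approval-based multiwinner election with n voters and let W ⊆ C with |W| = k. If W fails PJR+ (i.e., there exist ℓ ∈ {1,…,k} and G ⊆ V with |G| ≥ nℓ/k and (⋂_{v∈G} A(v)) ∖ W ≠ ∅ but |W ∩ ⋃_{v∈G} A(v)| < ℓ), then W is not core stable. Equivalently, every core stable committee satisfies PJR+. -/
/-- A committee `W` (of size `k`) satisfies PJR+ for the election `(V, C, k, A)`:
for every `ℓ ∈ {1,…,k}` and every group `G ⊆ V` with `|G| ≥ nℓ/k` such that some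
candidate outside `W` is approved by all members of `G`, the committee contains at
least `ℓ` candidates approved by some member of `G`. -/
def SatisfiesPJRplus {𝒱 𝒞 : Type*} [DecidableEq 𝒞]
    (V : Finset 𝒱) (C : Finset 𝒞) (k : ℕ) (A : 𝒱 → Finset 𝒞) (W : Finset 𝒞) : Prop :=
  W.card = k ∧
    ∀ ℓ : ℕ, 1 ≤ ℓ → ℓ ≤ k →
      ∀ G ⊆ V, ((V.card : ℝ) * ℓ / k ≤ G.card) →
        (∃ c ∈ C, c ∉ W ∧ ∀ v ∈ G, c ∈ A v) →
          ℓ ≤ (W ∩ G.biUnion A).card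

/-- A committee `W` (of size `k`) is core stable for the election `(V, C, k, A)`:
for every `ℓ ∈ {1,…,k}`, every `T ⊆ C` with `|T| ≤ ℓ` and every group `G ⊆ V` with
`|G| ≥ nℓ/k`, some voter `v ∈ G` approves at least as many members of `W` as of `T`. -/
def CoreStable {𝒱 𝒞 : Type*} [DecidableEq 𝒞]
    (V : Finset 𝒱) (C : Finset 𝒞) (k : ℕ) (A : 𝒱 → Finset 𝒞) (W : Finset 𝒞) : Prop :=
  W.card = k ∧
    ∀ ℓ : ℕ, 1 ≤ ℓ → ℓ ≤ k →
      ∀ T ⊆ C, T.card ≤ ℓ →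
        ∀ G ⊆ V, ((V.card : ℝ) * ℓ / k ≤ G.card) →
          ∃ v ∈ G, (T ∩ A v).card ≤ (W ∩ A v).card

/-- Every core stable committee satisfies PJR+ (equivalently, a committee failing
PJR+ is not core stable). -/
theorem coreStable_implies_PJRplus {𝒱 𝒞 : Type*} [DecidableEq 𝒞]
    (V : Finset 𝒱) (C : Finset 𝒞) (k : ℕ) (hk : 0 < k)
    (A : 𝒱 → Finset 𝒞) (hA : ∀ v, A v ⊆ C)
    (W : Finset 𝒞) (hW : W ⊆ C) (hWcard : W.card = k)
    (hcore : CoreStable V C k A W) :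
    SatisfiesPJRplus V C k A W := by
  refine ⟨hWcard, ?_⟩
  intro ℓ hℓ1 hℓk G hGV hGcard hc
  obtain ⟨c, hcC, hcW, hcall⟩ := hc
  by_contra hlt
  push_neg at hlt
  set T : Finset 𝒞 := insert c (W ∩ G.biUnion A) with hT
  have hTC : T ⊆ C := by
    intro x hx
    rcases Finset.mem_insert.mp hx with h | h
    · exact h ▸ hcC
    · exact hW (Finset.mem_inter.mp h).1
  have hTcard : T.card ≤ ℓ := by
    have h1 : T.card ≤ (W ∩ G.biUnion A).card + 1 := by
      rw [hT]; exact Finset.card_insert_le _ _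
    omega
  obtain ⟨v, hvG, hvle⟩ := hcore.2 ℓ hℓ1 hℓk T hTC hTcard G hGV hGcard
  have hsub : insert c (W ∩ A v) ⊆ T ∩ A v := by
    intro x hx
    rcases Finset.mem_insert.mp hx with h | h
    · subst h
      exact Finset.mem_inter.mpr ⟨Finset.mem_insert_self _ _, hcall v hvG⟩
    · have hx' := Finset.mem_inter.mp h
      refine Finset.mem_inter.mpr ⟨Finset.mem_insert_of_mem ?_, hx'.2⟩
      exact Finset.mem_inter.mpr ⟨hx'.1, Finset.mem_biUnion.mpr ⟨v, hvG, hx'.2⟩⟩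
  have hcW' : c ∉ W ∩ A v := fun h => hcW (Finset.mem_inter.mp h).1
  have : (W ∩ A v).card + 1 ≤ (T ∩ A v).card := by
    have := Finset.card_le_card hsub
    rwa [Finset.card_insert_of_notMem hcW'] at this
  omega
end

section
/- Let σ ≥ 1, let p_1,…,p_σ ∈ [0,1] with ∑_{t=1}^σ p_t = 1, and let the pair (X,Y) be distributed according to the mixture measure ∑_{t=1}^σ p_t · (U_{[t,t+1]} ⊗ U_{[t,t+1]}), where U_I is the uniform probability measure on the interval I. Let C be a finite subset of ⋃_{t=1}^σ (t, t+1), let S ⊆ C, and let c ∈ C ∖ S with c ∈ (t, t+1). Define c⁻_S = max({s ∈ S : s ≤ c} ∪ {t}) and c⁺_S = min({s ∈ S : s ≥ c} ∪ {t+1}). Then Pr[ min(X,Y) ≤ c ≤ max(X,Y) and [min(X,Y), max(X,Y)] ∩ S = ∅ ] = 2 p_t (c − c⁻_S)(c⁺_S − c). -/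
open MeasureTheory

/-- The distribution of the pair of endpoints `(X, Y)` of a random voter in the uniform
RIV model with `σ` segments and segment probabilities `p 1, …, p σ`: the mixture
`∑ t, p t • (U_{[t,t+1]} ⊗ U_{[t,t+1]})` where `U_I` is the uniform measure on `I`. -/
noncomputable def rivMeasure (σ : ℕ) (p : ℕ → ℝ) : Measure (ℝ × ℝ) :=
  ∑ t ∈ Finset.Icc 1 σ,
    ENNReal.ofReal (p t) •
      ((volume.restrict (Set.Icc (t : ℝ) (t + 1))).prod
        (volume.restrict (Set.Icc (t : ℝ) (t + 1))))

/-- The probability (under the uniform RIV mixture) that a random voter approves the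
candidate `c` and none of the candidates in `S` equals `2 p_t (c − c⁻_S)(c⁺_S − c)`. -/
theorem riv_approval_probability
    (σ : ℕ) (p : ℕ → ℝ)
    (hp0 : ∀ t ∈ Finset.Icc 1 σ, 0 ≤ p t) (hp1 : ∀ t ∈ Finset.Icc 1 σ, p t ≤ 1)
    (hpsum : ∑ t ∈ Finset.Icc 1 σ, p t = 1)
    (C : Finset ℝ)
    (hC : ∀ x ∈ C, ∃ t ∈ Finset.Icc 1 σ, x ∈ Set.Ioo (t : ℝ) (t + 1))
    (S : Finset ℝ) (hS : S ⊆ C)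
    (c : ℝ) (hcC : c ∈ C) (hcS : c ∉ S)
    (t : ℕ) (ht : t ∈ Finset.Icc 1 σ) (hct : c ∈ Set.Ioo (t : ℝ) (t + 1))
    (cminus cplus : ℝ)
    (hcminus : cminus = (insert (t : ℝ) (S.filter (fun s => s ≤ c))).max'
      (Finset.insert_nonempty _ _))
    (hcplus : cplus = (insert ((t : ℝ) + 1) (S.filter (fun s => c ≤ s))).min'
      (Finset.insert_nonempty _ _)) :
    rivMeasure σ p
        {xy : ℝ × ℝ |
          (min xy.1 xy.2 ≤ c ∧ c ≤ max xy.1 xy.2) ∧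
            ∀ s ∈ S, ¬ (min xy.1 xy.2 ≤ s ∧ s ≤ max xy.1 xy.2)} =
      ENNReal.ofReal (2 * p t * (c - cminus) * (cplus - c)) := by
  set E : Set (ℝ × ℝ) :=
    {xy : ℝ × ℝ |
      (min xy.1 xy.2 ≤ c ∧ c ≤ max xy.1 xy.2) ∧
        ∀ s ∈ S, ¬ (min xy.1 xy.2 ≤ s ∧ s ≤ max xy.1 xy.2)} with hE
  have htc : (t : ℝ) < c := hct.1
  have hct1 : c < (t : ℝ) + 1 := hct.2
  -- basic facts about cminus and cplus
  have ht_cm : (t : ℝ) ≤ cminus := by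
    rw [hcminus]; exact Finset.le_max' _ _ (Finset.mem_insert_self _ _)
  have hcm_le : cminus ≤ c := by
    rw [hcminus]
    apply Finset.max'_le
    intro a ha
    rcases Finset.mem_insert.1 ha with h | h
    · exact h ▸ htc.le
    · exact (Finset.mem_filter.1 h).2
  have hc_cp : c ≤ cplus := by
    rw [hcplus]
    apply Finset.le_min'
    intro a ha
    rcases Finset.mem_insert.1 ha with h | h
    · exact h ▸ hct1.le
    · exact (Finset.mem_filter.1 h).2
  have hcp_t1 : cplus ≤ (t : ℝ) + 1 := by
    rw [hcplus]; exact Finset.min'_le _ _ (Finset.mem_insert_self _ _)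
  have hs_le : ∀ s ∈ S, s ≤ c → s ≤ cminus := by
    intro s hs hsc
    rw [hcminus]
    refine Finset.le_max' _ _ (Finset.mem_insert_of_mem ?_)
    exact Finset.mem_filter.2 ⟨hs, hsc⟩
  have hs_ge : ∀ s ∈ S, c ≤ s → cplus ≤ s := by
    intro s hs hsc
    rw [hcplus]
    refine Finset.min'_le _ _ (Finset.mem_insert_of_mem ?_)
    exact Finset.mem_filter.2 ⟨hs, hsc⟩
  -- measurability of E
  have hmnm : Measurable fun xy : ℝ × ℝ => min xy.1 xy.2 :=
    measurable_fst.min measurable_snd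
  have hmxm : Measurable fun xy : ℝ × ℝ => max xy.1 xy.2 :=
    measurable_fst.max measurable_snd
  have hEmeas : MeasurableSet E := by
    have hE2 : E = ({xy : ℝ × ℝ | min xy.1 xy.2 ≤ c} ∩ {xy : ℝ × ℝ | c ≤ max xy.1 xy.2}) ∩
        ⋂ s ∈ (S : Set ℝ),
          ({xy : ℝ × ℝ | min xy.1 xy.2 ≤ s} ∩ {xy : ℝ × ℝ | s ≤ max xy.1 xy.2})ᶜ := by
      ext xy
      simp only [hE, Set.mem_setOf_eq, Set.mem_inter_iff, Set.mem_iInter, Set.mem_compl_iff,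
        Finset.mem_coe, not_and]
    rw [hE2]
    exact ((measurableSet_le hmnm measurable_const).inter
        (measurableSet_le measurable_const hmxm)).inter
      (MeasurableSet.biInter S.countable_toSet fun s _ =>
        ((measurableSet_le hmnm measurable_const).inter
          (measurableSet_le measurable_const hmxm)).compl)
  -- component measures
  have hcomp : ∀ a : ℕ,
      ((volume.restrict (Set.Icc (a : ℝ) (a + 1))).prod
        (volume.restrict (Set.Icc (a : ℝ) (a + 1)))) E =
      (volume.prod volume) (E ∩ Set.Icc (a : ℝ) (a + 1) ×ˢ Set.Icc (a : ℝ) (a + 1)) := by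
    intro a
    rw [Measure.prod_restrict, Measure.restrict_apply hEmeas]
  -- the off components vanish
  have hzero : ∀ a : ℕ, a ∈ Finset.Icc 1 σ → a ≠ t →
      E ∩ Set.Icc (a : ℝ) (a + 1) ×ˢ Set.Icc (a : ℝ) (a + 1) = ∅ := by
    intro a _ hat
    ext ⟨x, y⟩
    simp only [Set.mem_inter_iff, Set.mem_empty_iff_false, iff_false, Set.mem_prod,
      Set.mem_Icc, hE, Set.mem_setOf_eq]
    rintro ⟨⟨⟨hminc, hcmax⟩, -⟩, ⟨hx1, hx2⟩, ⟨hy1, hy2⟩⟩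
    rcases lt_or_gt_of_ne hat with h | h
    · -- a < t, so max ≤ a+1 ≤ t < c
      have : (a : ℝ) + 1 ≤ (t : ℝ) := by exact_mod_cast Nat.succ_le_of_lt h
      have : max x y ≤ (t : ℝ) := (max_le hx2 hy2).trans this
      linarith [htc]
    · -- t < a, so min ≥ a ≥ t+1 > c
      have : (t : ℝ) + 1 ≤ (a : ℝ) := by exact_mod_cast Nat.succ_le_of_lt h
      have : (t : ℝ) + 1 ≤ min x y := this.trans (le_min hx1 hy1)
      linarith [hct1]
  -- the main component
  have hmain : (volume.prod volume)
      (E ∩ Set.Icc (t : ℝ) (t + 1) ×ˢ Set.Icc (t : ℝ) (t + 1)) =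
      ENNReal.ofReal (c - cminus) * ENNReal.ofReal (cplus - c) +
        ENNReal.ofReal (cplus - c) * ENNReal.ofReal (c - cminus) := by
    apply le_antisymm
    · -- upper bound
      have hsub : E ∩ Set.Icc (t : ℝ) (t + 1) ×ˢ Set.Icc (t : ℝ) (t + 1) ⊆
          (Set.Icc cminus c ×ˢ Set.Icc c cplus) ∪ (Set.Icc c cplus ×ˢ Set.Icc cminus c) := by
        rintro ⟨x, y⟩ ⟨⟨⟨hminc, hcmax⟩, hSs⟩, ⟨hx1, hx2⟩, ⟨hy1, hy2⟩⟩
        simp only [Set.mem_Icc] at hx1 hx2 hy1 hy2 ⊢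
        rcases le_total x y with hxy | hyx
        · rw [min_eq_left hxy] at hminc hSs
          rw [max_eq_right hxy] at hcmax hSs
          left
          refine ⟨⟨?_, hminc⟩, hcmax, ?_⟩
          · -- cminus ≤ x
            rw [hcminus]
            apply Finset.max'_le
            intro b hb
            rcases Finset.mem_insert.1 hb with h | h
            · exact h ▸ hx1
            · obtain ⟨hbS, hbc⟩ := Finset.mem_filter.1 h
              by_contra hbx
              exact hSs b hbS ⟨le_of_not_ge hbx, hbc.trans hcmax⟩
          · -- y ≤ cplus
            rw [hcplus]
            apply Finset.le_min'
            intro b hb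
            rcases Finset.mem_insert.1 hb with h | h
            · exact h ▸ hy2
            · obtain ⟨hbS, hbc⟩ := Finset.mem_filter.1 h
              by_contra hby
              exact hSs b hbS ⟨hminc.trans hbc, le_of_not_ge hby⟩
        · rw [min_eq_right hyx] at hminc hSs
          rw [max_eq_left hyx] at hcmax hSs
          right
          refine ⟨⟨hcmax, ?_⟩, ?_, hminc⟩
          · -- x ≤ cplus
            rw [hcplus]
            apply Finset.le_min'
            intro b hb
            rcases Finset.mem_insert.1 hb with h | h
            · exact h ▸ hx2
            · obtain ⟨hbS, hbc⟩ := Finset.mem_filter.1 h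
              by_contra hbx
              exact hSs b hbS ⟨hminc.trans hbc, le_of_not_ge hbx⟩
          · -- cminus ≤ y
            rw [hcminus]
            apply Finset.max'_le
            intro b hb
            rcases Finset.mem_insert.1 hb with h | h
            · exact h ▸ hy1
            · obtain ⟨hbS, hbc⟩ := Finset.mem_filter.1 h
              by_contra hby
              exact hSs b hbS ⟨le_of_not_ge hby, hbc.trans hcmax⟩
      calc (volume.prod volume) (E ∩ Set.Icc (t : ℝ) (t + 1) ×ˢ Set.Icc (t : ℝ) (t + 1))
          ≤ (volume.prod volume)
            ((Set.Icc cminus c ×ˢ Set.Icc c cplus) ∪ (Set.Icc c cplus ×ˢ Set.Icc cminus c)) :=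
            measure_mono hsub
        _ ≤ (volume.prod volume) (Set.Icc cminus c ×ˢ Set.Icc c cplus) +
            (volume.prod volume) (Set.Icc c cplus ×ˢ Set.Icc cminus c) := measure_union_le _ _
        _ = ENNReal.ofReal (c - cminus) * ENNReal.ofReal (cplus - c) +
            ENNReal.ofReal (cplus - c) * ENNReal.ofReal (c - cminus) := by
            rw [Measure.prod_prod, Measure.prod_prod, Real.volume_Icc, Real.volume_Icc]
    · -- lower bound
      have hsub2 : (Set.Ioo cminus c ×ˢ Set.Ioo c cplus) ∪ (Set.Ioo c cplus ×ˢ Set.Ioo cminus c) ⊆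
          E ∩ Set.Icc (t : ℝ) (t + 1) ×ˢ Set.Icc (t : ℝ) (t + 1) := by
        rintro ⟨x, y⟩ (⟨hx, hy⟩ | ⟨hx, hy⟩) <;>
          simp only [Set.mem_Ioo] at hx hy <;>
          refine ⟨⟨⟨?_, ?_⟩, ?_⟩, ?_⟩
        · exact (min_le_left x y).trans hx.2.le
        · exact hy.1.le.trans (le_max_right x y)
        · rintro s hsS ⟨h1, h2⟩
          have hxy : x ≤ y := (hx.2.trans hy.1).le
          rw [min_eq_left hxy] at h1
          rw [max_eq_right hxy] at h2
          rcases le_total s c with hsc | hsc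
          · exact absurd (h1.trans (hs_le s hsS hsc)) (not_le.2 hx.1)
          · exact absurd ((hs_ge s hsS hsc).trans h2) (not_le.2 hy.2)
        · constructor <;> simp only [Set.mem_Icc] <;> constructor <;> linarith
        · exact (min_le_right x y).trans hy.2.le
        · exact hx.1.le.trans (le_max_left x y)
        · rintro s hsS ⟨h1, h2⟩
          have hyx : y ≤ x := (hy.2.trans hx.1).le
          rw [min_eq_right hyx] at h1
          rw [max_eq_left hyx] at h2
          rcases le_total s c with hsc | hsc
          · exact absurd (h1.trans (hs_le s hsS hsc)) (not_le.2 hy.1)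
          · exact absurd ((hs_ge s hsS hsc).trans h2) (not_le.2 hx.2)
        · constructor <;> simp only [Set.mem_Icc] <;> constructor <;> linarith
      have hdisj : Disjoint (Set.Ioo cminus c ×ˢ Set.Ioo c cplus)
          (Set.Ioo c cplus ×ˢ Set.Ioo cminus c) := by
        rw [Set.disjoint_left]
        rintro ⟨x, y⟩ ⟨hx, -⟩ ⟨hx', -⟩
        simp only [Set.mem_Ioo] at hx hx'
        exact absurd (hx.2.trans hx'.1) (lt_irrefl x)
      calc ENNReal.ofReal (c - cminus) * ENNReal.ofReal (cplus - c) +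
            ENNReal.ofReal (cplus - c) * ENNReal.ofReal (c - cminus)
          = (volume.prod volume) (Set.Ioo cminus c ×ˢ Set.Ioo c cplus) +
            (volume.prod volume) (Set.Ioo c cplus ×ˢ Set.Ioo cminus c) := by
            rw [Measure.prod_prod, Measure.prod_prod, Real.volume_Ioo, Real.volume_Ioo]
        _ = (volume.prod volume)
            ((Set.Ioo cminus c ×ˢ Set.Ioo c cplus) ∪ (Set.Ioo c cplus ×ˢ Set.Ioo cminus c)) :=
            (measure_union hdisj (measurableSet_Ioo.prod measurableSet_Ioo)).symm
        _ ≤ (volume.prod volume) (E ∩ Set.Icc (t : ℝ) (t + 1) ×ˢ Set.Icc (t : ℝ) (t + 1)) :=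
            measure_mono hsub2
  -- assemble
  rw [rivMeasure, Measure.finset_sum_apply]
  have hsum : ∑ a ∈ Finset.Icc 1 σ,
      (ENNReal.ofReal (p a) •
        ((volume.restrict (Set.Icc (a : ℝ) (a + 1))).prod
          (volume.restrict (Set.Icc (a : ℝ) (a + 1))))) E =
      ENNReal.ofReal (p t) *
        (ENNReal.ofReal (c - cminus) * ENNReal.ofReal (cplus - c) +
          ENNReal.ofReal (cplus - c) * ENNReal.ofReal (c - cminus)) := by
    rw [Finset.sum_eq_single_of_mem t ht]
    · rw [Measure.smul_apply, smul_eq_mul, hcomp, hmain]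
    · intro a ha hat
      rw [Measure.smul_apply, smul_eq_mul, hcomp, hzero a ha hat, measure_empty, mul_zero]
  rw [hsum]
  have h1 : (0 : ℝ) ≤ c - cminus := sub_nonneg.2 hcm_le
  have h2 : (0 : ℝ) ≤ cplus - c := sub_nonneg.2 hc_cp
  rw [← ENNReal.ofReal_mul h2, ← ENNReal.ofReal_mul h1, ← ENNReal.ofReal_add (by positivity)
    (by positivity), ← ENNReal.ofReal_mul (hp0 t ht)]
  congr 1
  ring
end

section
/- Fix a segment t ∈ {1,…,σ} of a uniform RIV model with segment probability p_t, a finite candidate set C_t ⊂ (t, t+1), and an integer k_t ≥ 0 with |C_t| ≥ k_t, and let Ŵ_t be the greedy committee for segment t. Then for every c ∈ C_t ∖ Ŵ_t and all integers r₁, r₂ ≥ 0, the probability (over a random voter of the uniform RIV model) that the voter's approval interval contains c, contains at most r₁ points of Ŵ_t strictly to the left of c, and contains at most r₂ points of Ŵ_t strictly to the right of c, equals 2 p_t · d⁻_{r₁}(c) · d⁺_{r₂}(c). -/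
open MeasureTheory

/-- The `ξ`-th marked point of segment `t`: `t + (2ξ−1)/(2(k_t+2))`. -/
noncomputable def markedPoint (t kt : ℕ) (ξ : ℕ) : ℝ :=
  (t : ℝ) + (2 * (ξ : ℝ) - 1) / (2 * ((kt : ℝ) + 2))

/-- `w 2, …, w (kt+1)` is a greedy committee for segment `t` with candidate set `Ct`:
for each `ξ = 2, …, kt+1`, `w ξ` is a candidate not chosen before that is closest to
the marked point `m_ξ` among all not-yet-chosen candidates. -/
def IsGreedyCommittee (t kt : ℕ) (Ct : Finset ℝ) (w : ℕ → ℝ) : Prop :=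
  ∀ ξ ∈ Finset.Icc 2 (kt + 1),
    w ξ ∈ Ct ∧ w ξ ∉ (Finset.Icc 2 (ξ - 1)).image w ∧
      ∀ c' ∈ Ct, c' ∉ (Finset.Icc 2 (ξ - 1)).image w →
        |w ξ - markedPoint t kt ξ| ≤ |c' - markedPoint t kt ξ|

/-- `rank W c = ρ(c)`: the number of points of `W` strictly to the left of `c`. -/
noncomputable def rank (W : Finset ℝ) (c : ℝ) : ℕ :=
  (W.filter (fun x => x < c)).card

/-- `dPlus t kt W c r = d⁺_r(c)`: the distance from `c` to the `(r+1)`-th element of `W`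
to the right of `c` (elements of `W` listed in increasing order), or to the right
endpoint `t+1` of the segment if no such element exists. -/
noncomputable def dPlus (t kt : ℕ) (W : Finset ℝ) (c : ℝ) (r : ℕ) : ℝ :=
  if rank W c + r < kt then (W.sort (· ≤ ·)).getD (rank W c + r) 0 - c
  else ((t : ℝ) + 1) - c

/-- `dMinus t W c r = d⁻_r(c)`: the distance from `c` to the `(r+1)`-th element of `W`
to the left of `c`, or to the left endpoint `t` of the segment if no such element exists. -/
noncomputable def dMinus (t : ℕ) (W : Finset ℝ) (c : ℝ) (r : ℕ) : ℝ :=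
  if r + 1 ≤ rank W c then c - (W.sort (· ≤ ·)).getD (rank W c - r - 1) 0
  else c - (t : ℝ)

/-- The event that a voter with endpoint pair `xy` approves `c`, approves at most `r₁`
elements of `W` strictly to the left of `c`, and at most `r₂` elements of `W` strictly
to the right of `c` (the voter's approval interval is `[min xy, max xy]`). -/
def approvalEvent (W : Finset ℝ) (c : ℝ) (r₁ r₂ : ℕ) : Set (ℝ × ℝ) :=
  {xy | (min xy.1 xy.2 ≤ c ∧ c ≤ max xy.1 xy.2) ∧
    (W.filter (fun x => x < c ∧ min xy.1 xy.2 ≤ x ∧ x ≤ max xy.1 xy.2)).card ≤ r₁ ∧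
    (W.filter (fun x => c < x ∧ min xy.1 xy.2 ≤ x ∧ x ≤ max xy.1 xy.2)).card ≤ r₂}

/-- `segmentMiddle t kt Ct = K_t`: the candidates of `C_t` lying in
`(t + 3/(2(k_t+2)), t + 1 − 3/(2(k_t+2)))`. -/
noncomputable def segmentMiddle (t kt : ℕ) (Ct : Finset ℝ) : Finset ℝ :=
  Ct.filter (fun x =>
    (t : ℝ) + 3 / (2 * ((kt : ℝ) + 2)) < x ∧ x < (t : ℝ) + 1 - 3 / (2 * ((kt : ℝ) + 2)))

lemma riv_get_lt_iff (W : Finset ℝ) (c : ℝ) (i : ℕ) (h : i < (W.sort (· ≤ ·)).length) :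
    (W.sort (· ≤ ·)).get ⟨i, h⟩ < c ↔ i < rank W c := by
  classical
  set l := W.sort (· ≤ ·) with hl
  have hsm : StrictMono (l.get) := fun a b hab => W.sortedLT_sort.strictMono_get hab
  have hcard : (Finset.univ.filter (fun j : Fin l.length => l.get j < c)).card = rank W c := by
    have himg : (Finset.univ.filter (fun j : Fin l.length => l.get j < c)).image l.get
        = W.filter (fun x => x < c) := by
      ext x
      simp only [Finset.mem_image, Finset.mem_filter, Finset.mem_univ, true_and]
      constructor
      · rintro ⟨j, hj, rfl⟩
        exact ⟨(Finset.mem_sort (α := ℝ) (· ≤ ·)).1 (l.get_mem j), hj⟩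
      · rintro ⟨hxW, hxc⟩
        have hxl : x ∈ l := (Finset.mem_sort (α := ℝ) (· ≤ ·)).2 hxW
        obtain ⟨j, hj⟩ := List.mem_iff_get.1 hxl
        exact ⟨j, by rw [hj]; exact hxc, hj⟩
    rw [rank, ← himg, Finset.card_image_of_injective _ hsm.injective]
  constructor
  · intro hlt
    have hsub : Finset.Iic (⟨i, h⟩ : Fin l.length) ⊆
        Finset.univ.filter (fun j => l.get j < c) := by
      intro j hj
      simp only [Finset.mem_Iic] at hj
      simp only [Finset.mem_filter, Finset.mem_univ, true_and]
      exact lt_of_le_of_lt (hsm.monotone hj) hlt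
    have hle := Finset.card_le_card hsub
    rw [Fin.card_Iic, hcard] at hle
    simpa using hle
  · intro hlt
    by_contra hge
    have hsub : Finset.univ.filter (fun j : Fin l.length => l.get j < c) ⊆
        Finset.Iio (⟨i, h⟩ : Fin l.length) := by
      intro j hj
      simp only [Finset.mem_filter, Finset.mem_univ, true_and] at hj
      simp only [Finset.mem_Iio]
      by_contra hji
      push_neg at hji
      exact hge (lt_of_le_of_lt (hsm.monotone hji) hj)
    have hle := Finset.card_le_card hsub
    rw [Fin.card_Iio, hcard] at hle
    have : rank W c ≤ i := by simpa using hle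
    omega

/-- For a candidate `c ∈ C_t ∖ Ŵ_t`, the probability that a random voter of the uniform
RIV model approves `c`, at most `r₁` elements of `Ŵ_t` strictly to the left of `c`, and
at most `r₂` elements of `Ŵ_t` strictly to the right of `c`, equals
`2 p_t · d⁻_{r₁}(c) · d⁺_{r₂}(c)`. -/
theorem riv_greedy_approval_probability
    (σ : ℕ) (p : ℕ → ℝ)
    (hp0 : ∀ t ∈ Finset.Icc 1 σ, 0 ≤ p t)
    (hpsum : ∑ t ∈ Finset.Icc 1 σ, p t = 1)
    (t : ℕ) (ht : t ∈ Finset.Icc 1 σ)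
    (Ct : Finset ℝ) (hCt : ∀ x ∈ Ct, x ∈ Set.Ioo (t : ℝ) (t + 1))
    (kt : ℕ) (hkt : kt ≤ Ct.card)
    (w : ℕ → ℝ) (hw : IsGreedyCommittee t kt Ct w)
    (W : Finset ℝ) (hW : W = (Finset.Icc 2 (kt + 1)).image w)
    (c : ℝ) (hcCt : c ∈ Ct) (hcW : c ∉ W)
    (r₁ r₂ : ℕ) :
    rivMeasure σ p (approvalEvent W c r₁ r₂) =
      ENNReal.ofReal (2 * p t * dMinus t W c r₁ * dPlus t kt W c r₂) := by
  classical
  obtain ⟨hct, hct1⟩ := hCt c hcCt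
  -- basic facts about W
  have hWsub : ∀ x ∈ W, (t : ℝ) < x ∧ x < (t : ℝ) + 1 := by
    intro x hx
    rw [hW] at hx
    obtain ⟨ξ, hξ, rfl⟩ := Finset.mem_image.1 hx
    exact ⟨(hCt _ (hw ξ hξ).1).1, (hCt _ (hw ξ hξ).1).2⟩
  have hWcard : W.card = kt := by
    rw [hW, Finset.card_image_of_injOn, Nat.card_Icc]
    · omega
    · intro a ha b hb hab
      simp only [Finset.coe_Icc, Set.mem_Icc] at ha hb
      by_contra hne
      rcases Nat.lt_or_ge a b with h' | h'
      · exact (hw b (by simp only [Finset.mem_Icc]; omega)).2.1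
          (Finset.mem_image.2 ⟨a, by simp only [Finset.mem_Icc]; omega, hab⟩)
      · have h'' : b < a := by omega
        exact (hw a (by simp only [Finset.mem_Icc]; omega)).2.1
          (Finset.mem_image.2 ⟨b, by simp only [Finset.mem_Icc]; omega, hab.symm⟩)
  set l : List ℝ := W.sort (· ≤ ·) with hldef
  set ρ : ℕ := rank W c with hρdef
  have hlen : l.length = kt := by rw [Finset.length_sort, hWcard]
  have hρle : ρ ≤ kt := by
    rw [hρdef, rank, ← hWcard]; exact Finset.card_filter_le _ _
  have hget_lt : ∀ (i : ℕ) (h : i < l.length), (l.get ⟨i, h⟩ < c ↔ i < ρ) :=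
    fun i h => riv_get_lt_iff W c i h
  have hsm : StrictMono l.get := fun a b hab => W.sortedLT_sort.strictMono_get hab
  have hmemW : ∀ (i : ℕ) (h : i < l.length), l.get ⟨i, h⟩ ∈ W :=
    fun i h => (Finset.mem_sort (α := ℝ) (· ≤ ·)).1 (l.get_mem ⟨i, h⟩)
  have hmem_l : ∀ x, x ∈ W → x ∈ l :=
    fun x hx => (Finset.mem_sort (α := ℝ) (· ≤ ·)).2 hx
  have hidx_lt : ∀ x ∈ W, l.idxOf x < l.length :=
    fun x hx => List.idxOf_lt_length_iff.2 (hmem_l x hx)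
  have hget_idx : ∀ (x : ℝ) (hx : x ∈ W), l.get ⟨l.idxOf x, hidx_lt x hx⟩ = x := by
    intro x hx
    simp [List.get_eq_getElem, List.getElem_idxOf (hidx_lt x hx)]
  have hgetD : ∀ (i : ℕ) (h : i < l.length), l.getD i 0 = l.get ⟨i, h⟩ :=
    fun i h => List.getD_eq_get l 0 ⟨i, h⟩
  -- the endpoints L and R
  set L := (if r₁ + 1 ≤ ρ then l.getD (ρ - r₁ - 1) 0 else (t : ℝ)) with hLdef
  set R := (if ρ + r₂ < kt then l.getD (ρ + r₂) 0 else (t : ℝ) + 1) with hRdef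
  have hdM : dMinus t W c r₁ = c - L := by
    rw [hLdef]
    simp only [dMinus, ← hρdef, ← hldef]
    split_ifs <;> ring
  have hdP : dPlus t kt W c r₂ = R - c := by
    rw [hRdef]
    simp only [dPlus, ← hρdef, ← hldef]
    split_ifs <;> ring
  have hLlt : L < c := by
    rw [hLdef]; split_ifs with h
    · have hidx : ρ - r₁ - 1 < l.length := by omega
      rw [hgetD _ hidx, hget_lt]
      omega
    · exact hct
  have htL : (t : ℝ) ≤ L := by
    rw [hLdef]; split_ifs with h
    · have hidx : ρ - r₁ - 1 < l.length := by omega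
      rw [hgetD _ hidx]
      exact le_of_lt (hWsub _ (hmemW _ hidx)).1
    · exact le_refl _
  have hcR : c < R := by
    rw [hRdef]; split_ifs with h
    · have hidx : ρ + r₂ < l.length := by omega
      rw [hgetD _ hidx]
      have hne : l.get ⟨ρ + r₂, hidx⟩ ≠ c := fun he => hcW (he ▸ hmemW _ hidx)
      have hnlt : ¬ l.get ⟨ρ + r₂, hidx⟩ < c := by rw [hget_lt]; omega
      exact lt_of_le_of_ne (not_lt.1 hnlt) (Ne.symm hne)
    · exact hct1
  have hRt : R ≤ (t : ℝ) + 1 := by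
    rw [hRdef]; split_ifs with h
    · have hidx : ρ + r₂ < l.length := by omega
      rw [hgetD _ hidx]
      exact le_of_lt (hWsub _ (hmemW _ hidx)).2
    · exact le_refl _
  -- upper counting bounds
  have hCard₁ : (W.filter (fun q => L < q ∧ q < c)).card ≤ r₁ := by
    by_cases h : r₁ + 1 ≤ ρ
    · have hidx0 : ρ - r₁ - 1 < l.length := by omega
      have hLval : L = l.get ⟨ρ - r₁ - 1, hidx0⟩ := by rw [hLdef, if_pos h, hgetD _ hidx0]
      have hmap : ∀ q ∈ W.filter (fun q => L < q ∧ q < c),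
          l.idxOf q ∈ Finset.Ioo (ρ - r₁ - 1) ρ := by
        intro q hq
        rw [Finset.mem_filter] at hq
        obtain ⟨hqW, hLq, hqc⟩ := hq
        have hqi := hidx_lt q hqW
        rw [Finset.mem_Ioo]
        constructor
        · by_contra hle
          push_neg at hle
          have : q ≤ L := by
            rw [hLval, ← hget_idx q hqW]
            exact hsm.monotone (Fin.mk_le_mk.2 hle)
          linarith
        · have hqc' : l.get ⟨l.idxOf q, hqi⟩ < c := by rw [hget_idx q hqW]; exact hqc
          rw [hget_lt] at hqc'
          exact hqc'
      have hinj : ∀ a ∈ W.filter (fun q => L < q ∧ q < c),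
          ∀ b ∈ W.filter (fun q => L < q ∧ q < c), l.idxOf a = l.idxOf b → a = b := by
        intro a ha b hb hab
        rw [Finset.mem_filter] at ha hb
        exact (List.idxOf_inj (hmem_l a ha.1)).1 hab
      have := Finset.card_le_card_of_injOn _ hmap hinj
      rw [Nat.card_Ioo] at this
      omega
    · have hsub : W.filter (fun q => L < q ∧ q < c) ⊆ W.filter (fun q => q < c) := by
        intro q hq
        rw [Finset.mem_filter] at hq ⊢
        exact ⟨hq.1, hq.2.2⟩
      have := Finset.card_le_card hsub
      have h2 : (W.filter (fun q => q < c)).card = ρ := by rw [hρdef]; rfl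
      omega
  have hCard₂ : (W.filter (fun q => c < q ∧ q < R)).card ≤ r₂ := by
    by_cases h : ρ + r₂ < kt
    · have hidx0 : ρ + r₂ < l.length := by omega
      have hRval : R = l.get ⟨ρ + r₂, hidx0⟩ := by rw [hRdef, if_pos h, hgetD _ hidx0]
      have hmap : ∀ q ∈ W.filter (fun q => c < q ∧ q < R),
          l.idxOf q ∈ Finset.Ico ρ (ρ + r₂) := by
        intro q hq
        rw [Finset.mem_filter] at hq
        obtain ⟨hqW, hcq, hqR⟩ := hq
        have hqi := hidx_lt q hqW
        rw [Finset.mem_Ico]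
        constructor
        · by_contra hlt
          push_neg at hlt
          have : l.get ⟨l.idxOf q, hqi⟩ < c := by rw [hget_lt]; exact hlt
          rw [hget_idx q hqW] at this
          linarith
        · have : l.get ⟨l.idxOf q, hqi⟩ < l.get ⟨ρ + r₂, hidx0⟩ := by
            rw [hget_idx q hqW, ← hRval]; exact hqR
          exact hsm.lt_iff_lt.1 this
      have hinj : ∀ a ∈ W.filter (fun q => c < q ∧ q < R),
          ∀ b ∈ W.filter (fun q => c < q ∧ q < R), l.idxOf a = l.idxOf b → a = b := by
        intro a ha b hb hab
        rw [Finset.mem_filter] at ha hb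
        exact (List.idxOf_inj (hmem_l a ha.1)).1 hab
      have := Finset.card_le_card_of_injOn _ hmap hinj
      rw [Nat.card_Ico] at this
      omega
    · have hsub : W.filter (fun q => c < q ∧ q < R) ⊆ W \ W.filter (fun q => q < c) := by
        intro q hq
        rw [Finset.mem_filter] at hq
        rw [Finset.mem_sdiff, Finset.mem_filter]
        exact ⟨hq.1, fun hq' => absurd hq'.2 (not_lt.2 (le_of_lt hq.2.1))⟩
      have h1 := Finset.card_le_card hsub
      have h2 : (W \ W.filter (fun q => q < c)).card = kt - ρ := by
        rw [Finset.card_sdiff_of_subset (Finset.filter_subset _ _), hWcard]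
        have h3 : (W.filter (fun q => q < c)).card = ρ := by rw [hρdef]; rfl
        omega
      omega
  -- lower counting bounds
  have hLB₁ : ∀ a b : ℝ, (t : ℝ) ≤ a → a < L → c ≤ b →
      r₁ < (W.filter (fun q => q < c ∧ a ≤ q ∧ q ≤ b)).card := by
    intro a b hta haL hcb
    have h : r₁ + 1 ≤ ρ := by
      by_contra h
      rw [hLdef, if_neg h] at haL
      exact absurd haL (not_lt.2 hta)
    have hidx0 : ρ - r₁ - 1 < l.length := by omega
    have hLval : L = l.get ⟨ρ - r₁ - 1, hidx0⟩ := by rw [hLdef, if_pos h, hgetD _ hidx0]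
    have hmap : ∀ i ∈ Finset.Icc (ρ - r₁ - 1) (ρ - 1),
        l.getD i 0 ∈ W.filter (fun q => q < c ∧ a ≤ q ∧ q ≤ b) := by
      intro i hi
      rw [Finset.mem_Icc] at hi
      have hidx : i < l.length := by omega
      rw [hgetD _ hidx, Finset.mem_filter]
      have h1 : l.get ⟨i, hidx⟩ < c := by rw [hget_lt]; omega
      refine ⟨hmemW _ hidx, h1, ?_, le_trans (le_of_lt h1) hcb⟩
      have h2 : L ≤ l.get ⟨i, hidx⟩ := by
        rw [hLval]; exact hsm.monotone (Fin.mk_le_mk.2 hi.1)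
      linarith
    have hinj : ∀ i ∈ Finset.Icc (ρ - r₁ - 1) (ρ - 1), ∀ j ∈ Finset.Icc (ρ - r₁ - 1) (ρ - 1),
        l.getD i 0 = l.getD j 0 → i = j := by
      intro i hi j hj hij
      rw [Finset.mem_Icc] at hi hj
      have hii : i < l.length := by omega
      have hjj : j < l.length := by omega
      rw [hgetD _ hii, hgetD _ hjj] at hij
      have := hsm.injective hij
      simpa using this
    have := Finset.card_le_card_of_injOn _ hmap hinj
    rw [Nat.card_Icc] at this
    omega
  have hLB₂ : ∀ a b : ℝ, a ≤ c → R < b → b ≤ (t : ℝ) + 1 →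
      r₂ < (W.filter (fun q => c < q ∧ a ≤ q ∧ q ≤ b)).card := by
    intro a b hac hRb hb1
    have h : ρ + r₂ < kt := by
      by_contra h
      rw [hRdef, if_neg h] at hRb
      exact absurd hRb (not_lt.2 hb1)
    have hidx0 : ρ + r₂ < l.length := by omega
    have hRval : R = l.get ⟨ρ + r₂, hidx0⟩ := by rw [hRdef, if_pos h, hgetD _ hidx0]
    have hmap : ∀ i ∈ Finset.Icc ρ (ρ + r₂),
        l.getD i 0 ∈ W.filter (fun q => c < q ∧ a ≤ q ∧ q ≤ b) := by
      intro i hi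
      rw [Finset.mem_Icc] at hi
      have hidx : i < l.length := by omega
      rw [hgetD _ hidx, Finset.mem_filter]
      have h1 : ¬ l.get ⟨i, hidx⟩ < c := by rw [hget_lt]; omega
      have hne : l.get ⟨i, hidx⟩ ≠ c := fun he => hcW (he ▸ hmemW _ hidx)
      have h1' : c < l.get ⟨i, hidx⟩ := lt_of_le_of_ne (not_lt.1 h1) (Ne.symm hne)
      refine ⟨hmemW _ hidx, h1', le_trans hac (le_of_lt h1'), ?_⟩
      have h2 : l.get ⟨i, hidx⟩ ≤ R := by
        rw [hRval]; exact hsm.monotone (Fin.mk_le_mk.2 hi.2)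
      linarith
    have hinj : ∀ i ∈ Finset.Icc ρ (ρ + r₂), ∀ j ∈ Finset.Icc ρ (ρ + r₂),
        l.getD i 0 = l.getD j 0 → i = j := by
      intro i hi j hj hij
      rw [Finset.mem_Icc] at hi hj
      have hii : i < l.length := by omega
      have hjj : j < l.length := by omega
      rw [hgetD _ hii, hgetD _ hjj] at hij
      have := hsm.injective hij
      simpa using this
    have := Finset.card_le_card_of_injOn _ hmap hinj
    rw [Nat.card_Icc] at this
    omega
  -- set inclusions
  have hsub1 : (Set.Ioc L c ×ˢ Set.Ioo c R) ∪ (Set.Ioo c R ×ˢ Set.Ioc L c) ⊆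
      approvalEvent W c r₁ r₂ ∩ (Set.Icc (t : ℝ) (t + 1) ×ˢ Set.Icc (t : ℝ) (t + 1)) := by
    rintro ⟨x, y⟩ (⟨hx, hy⟩ | ⟨hx, hy⟩)
    · have hxy : x < y := lt_of_le_of_lt hx.2 hy.1
      have hmin : min x y = x := min_eq_left (le_of_lt hxy)
      have hmax : max x y = y := max_eq_right (le_of_lt hxy)
      refine ⟨?_, ⟨le_of_lt (lt_of_le_of_lt htL hx.1), le_trans hx.2 (le_of_lt hct1)⟩,
        ⟨le_of_lt (lt_trans hct hy.1), le_trans (le_of_lt hy.2) hRt⟩⟩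
      simp only [approvalEvent, Set.mem_setOf_eq, hmin, hmax]
      refine ⟨⟨hx.2, le_of_lt hy.1⟩, ?_, ?_⟩
      · refine le_trans (Finset.card_le_card ?_) hCard₁
        intro q hq
        rw [Finset.mem_filter] at hq ⊢
        exact ⟨hq.1, lt_of_lt_of_le hx.1 hq.2.2.1, hq.2.1⟩
      · refine le_trans (Finset.card_le_card ?_) hCard₂
        intro q hq
        rw [Finset.mem_filter] at hq ⊢
        exact ⟨hq.1, hq.2.1, lt_of_le_of_lt hq.2.2.2 hy.2⟩
    · have hxy : y < x := lt_of_le_of_lt hy.2 hx.1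
      have hmin : min x y = y := min_eq_right (le_of_lt hxy)
      have hmax : max x y = x := max_eq_left (le_of_lt hxy)
      refine ⟨?_, ⟨le_of_lt (lt_trans hct hx.1), le_trans (le_of_lt hx.2) hRt⟩,
        ⟨le_of_lt (lt_of_le_of_lt htL hy.1), le_trans hy.2 (le_of_lt hct1)⟩⟩
      simp only [approvalEvent, Set.mem_setOf_eq, hmin, hmax]
      refine ⟨⟨hy.2, le_of_lt hx.1⟩, ?_, ?_⟩
      · refine le_trans (Finset.card_le_card ?_) hCard₁
        intro q hq
        rw [Finset.mem_filter] at hq ⊢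
        exact ⟨hq.1, lt_of_lt_of_le hy.1 hq.2.2.1, hq.2.1⟩
      · refine le_trans (Finset.card_le_card ?_) hCard₂
        intro q hq
        rw [Finset.mem_filter] at hq ⊢
        exact ⟨hq.1, hq.2.1, lt_of_le_of_lt hq.2.2.2 hx.2⟩
  have hsub2 : approvalEvent W c r₁ r₂ ∩ (Set.Icc (t : ℝ) (t + 1) ×ˢ Set.Icc (t : ℝ) (t + 1)) ⊆
      (Set.Icc L c ×ˢ Set.Icc c R) ∪ (Set.Icc c R ×ˢ Set.Icc L c) := by
    rintro ⟨x, y⟩ ⟨hE, hx, hy⟩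
    simp only [approvalEvent, Set.mem_setOf_eq] at hE
    obtain ⟨⟨hminc, hcmax⟩, hcnt₁, hcnt₂⟩ := hE
    have hmint : (t : ℝ) ≤ min x y := le_min hx.1 hy.1
    have hmaxt : max x y ≤ (t : ℝ) + 1 := max_le hx.2 hy.2
    have hLmin : L ≤ min x y := by
      by_contra hcon
      push_neg at hcon
      exact absurd (hLB₁ (min x y) (max x y) hmint hcon hcmax) (not_lt.2 hcnt₁)
    have hmaxR : max x y ≤ R := by
      by_contra hcon
      push_neg at hcon
      exact absurd (hLB₂ (min x y) (max x y) hminc hcon hmaxt) (not_lt.2 hcnt₂)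
    rcases le_total x y with hxy | hxy
    · rw [min_eq_left hxy] at hLmin hminc
      rw [max_eq_right hxy] at hmaxR hcmax
      exact Or.inl ⟨⟨hLmin, hminc⟩, hcmax, hmaxR⟩
    · rw [min_eq_right hxy] at hLmin hminc
      rw [max_eq_left hxy] at hmaxR hcmax
      exact Or.inr ⟨⟨hcmax, hmaxR⟩, hLmin, hminc⟩
  -- measure computations
  have hval0 : ∀ s ∈ Finset.Icc 1 σ, s ≠ t →
      ((volume.restrict (Set.Icc (s : ℝ) (s + 1))).prod
        (volume.restrict (Set.Icc (s : ℝ) (s + 1)))) (approvalEvent W c r₁ r₂) = 0 := by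
    intro s hs hne
    rw [Measure.prod_restrict, Measure.restrict_apply' (measurableSet_Icc.prod measurableSet_Icc)]
    have hempty : approvalEvent W c r₁ r₂ ∩
        (Set.Icc (s : ℝ) (s + 1) ×ˢ Set.Icc (s : ℝ) (s + 1)) = ∅ := by
      rw [Set.eq_empty_iff_forall_notMem]
      rintro ⟨x, y⟩ ⟨hE, hxy⟩
      simp only [approvalEvent, Set.mem_setOf_eq] at hE
      simp only [Set.mem_prod, Set.mem_Icc] at hxy
      obtain ⟨⟨hminc, hcmax⟩, -, -⟩ := hE
      obtain ⟨⟨hx1, hx2⟩, hy1, hy2⟩ := hxy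
      rcases Nat.lt_or_ge s t with h' | h'
      · have hs1 : (s : ℝ) + 1 ≤ (t : ℝ) := by exact_mod_cast Nat.succ_le_of_lt h'
        have hmx : max x y ≤ (s : ℝ) + 1 := max_le hx2 hy2
        linarith
      · have h'' : t + 1 ≤ s := by omega
        have hs1 : (t : ℝ) + 1 ≤ (s : ℝ) := by exact_mod_cast h''
        have hmn : (s : ℝ) ≤ min x y := le_min hx1 hy1
        linarith
    rw [hempty, measure_empty]
  have hdisj : Disjoint (Set.Ioc L c ×ˢ Set.Ioo c R) (Set.Ioo c R ×ˢ Set.Ioc L c) := by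
    rw [Set.disjoint_left]
    rintro ⟨x, y⟩ ⟨hx, -⟩ ⟨hx', -⟩
    exact absurd hx'.1 (not_lt.2 hx.2)
  have hAB : (volume.prod volume)
      ((Set.Ioc L c ×ˢ Set.Ioo c R) ∪ (Set.Ioo c R ×ˢ Set.Ioc L c)) =
      ENNReal.ofReal (2 * (c - L) * (R - c)) := by
    rw [measure_union hdisj (measurableSet_Ioo.prod measurableSet_Ioc),
      Measure.prod_prod, Measure.prod_prod, Real.volume_Ioc, Real.volume_Ioo,
      ← ENNReal.ofReal_mul (by linarith), ← ENNReal.ofReal_mul (by linarith),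
      ← ENNReal.ofReal_add (by nlinarith) (by nlinarith)]
    congr 1
    ring
  have hT2 : (volume.prod volume)
      ((Set.Icc L c ×ˢ Set.Icc c R) ∪ (Set.Icc c R ×ˢ Set.Icc L c)) ≤
      ENNReal.ofReal (2 * (c - L) * (R - c)) := by
    refine le_trans (measure_union_le _ _) ?_
    rw [Measure.prod_prod, Measure.prod_prod, Real.volume_Icc, Real.volume_Icc,
      ← ENNReal.ofReal_mul (by linarith), ← ENNReal.ofReal_mul (by linarith),
      ← ENNReal.ofReal_add (by nlinarith) (by nlinarith)]
    exact le_of_eq (by congr 1; ring)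
  have hseg : ((volume.restrict (Set.Icc (t : ℝ) (t + 1))).prod
      (volume.restrict (Set.Icc (t : ℝ) (t + 1)))) (approvalEvent W c r₁ r₂) =
      ENNReal.ofReal (2 * (c - L) * (R - c)) := by
    rw [Measure.prod_restrict, Measure.restrict_apply' (measurableSet_Icc.prod measurableSet_Icc)]
    refine le_antisymm (le_trans (measure_mono hsub2) hT2) ?_
    rw [← hAB]
    exact measure_mono hsub1
  rw [rivMeasure, Measure.finset_sum_apply, Finset.sum_eq_single_of_mem t ht]
  · rw [Measure.smul_apply, smul_eq_mul, hseg, ← ENNReal.ofReal_mul (hp0 t ht)]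
    congr 1
    rw [hdM, hdP]
    ring
  · intro s hs hne
    rw [Measure.smul_apply, smul_eq_mul, hval0 s hs hne, mul_zero]
end

section
/- Fix a segment t with a finite candidate set C_t ⊂ (t, t+1) and an integer k_t ≥ 0 with |C_t| ≥ k_t, and let Ŵ_t be the greedy committee for segment t. Then for every c ∈ K_t ∖ Ŵ_t and all integers r₁, r₂ ≥ 0, it holds that d⁺_{r₁}(c) + d⁻_{r₂}(c) ≤ 2(r₁ + r₂ + 1)/(k_t + 2). -/
open MeasureTheory

namespace GreedyAux

variable {W : Finset ℝ}

lemma getD_mem {i : ℕ} (hi : i < W.card) : (W.sort (· ≤ ·)).getD i 0 ∈ W := by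
  rw [List.getD_eq_getElem _ _ (by simpa using hi)]
  exact (Finset.mem_sort _).1 (List.getElem_mem _)

lemma getD_lt_getD {i j : ℕ} (hij : i < j) (hj : j < W.card) :
    (W.sort (· ≤ ·)).getD i 0 < (W.sort (· ≤ ·)).getD j 0 := by
  have hj' : j < (W.sort (· ≤ ·)).length := by simpa using hj
  rw [List.getD_eq_getElem _ _ (lt_trans hij hj'), List.getD_eq_getElem _ _ hj']
  exact List.Pairwise.rel_get_of_lt (Finset.sortedLT_sort W).pairwise (by simpa using hij)

lemma mem_iff_getD {x : ℝ} : x ∈ W ↔ ∃ j < W.card, (W.sort (· ≤ ·)).getD j 0 = x := by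
  constructor
  · intro hx
    have : x ∈ W.sort (· ≤ ·) := (Finset.mem_sort _).2 hx
    obtain ⟨j, hj, hjx⟩ := List.mem_iff_getElem.1 this
    exact ⟨j, by simpa using hj, by rw [List.getD_eq_getElem _ _ hj]; exact hjx⟩
  · rintro ⟨j, hj, rfl⟩
    exact getD_mem hj

lemma rank_getD {i : ℕ} (hi : i < W.card) :
    rank W ((W.sort (· ≤ ·)).getD i 0) = i := by
  set s := W.sort (· ≤ ·)
  have hfilter : W.filter (fun x => x < s.getD i 0) =
      (Finset.range i).image (fun j => s.getD j 0) := by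
    ext x
    simp only [Finset.mem_filter, Finset.mem_image, Finset.mem_range]
    constructor
    · rintro ⟨hxW, hx⟩
      obtain ⟨j, hj, rfl⟩ := mem_iff_getD.1 hxW
      refine ⟨j, ?_, rfl⟩
      by_contra hji
      push_neg at hji
      rcases eq_or_lt_of_le hji with rfl | h
      · exact absurd hx (lt_irrefl _)
      · exact absurd (getD_lt_getD h hj) (not_lt.2 hx.le)
    · rintro ⟨j, hj, rfl⟩
      exact ⟨getD_mem (lt_trans hj hi), getD_lt_getD hj hi⟩
  rw [rank, hfilter, Finset.card_image_of_injOn, Finset.card_range]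
  intro a ha b hb hab
  simp only [Finset.coe_range, Set.mem_Iio] at ha hb
  by_contra hne
  rcases lt_or_gt_of_ne hne with h | h
  · exact absurd hab (ne_of_lt (getD_lt_getD h (lt_trans hb hi)))
  · exact absurd hab.symm (ne_of_lt (getD_lt_getD h (lt_trans ha hi)))

lemma rank_le_card (c : ℝ) : rank W c ≤ W.card := Finset.card_filter_le _ _

lemma rank_mono {a b : ℝ} (hab : a ≤ b) : rank W a ≤ rank W b :=
  Finset.card_le_card (Finset.monotone_filter_right _ (fun x _ hx => lt_of_lt_of_le hx hab))

lemma getD_lt_of_lt_rank {c : ℝ} {i : ℕ} (hi : i < W.card) (h : i < rank W c) :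
    (W.sort (· ≤ ·)).getD i 0 < c := by
  by_contra hcle
  push_neg at hcle
  have := rank_mono (W := W) hcle
  rw [rank_getD hi] at this
  omega

lemma lt_getD_of_rank_le {c : ℝ} {i : ℕ} (hc : c ∉ W) (hi : i < W.card) (h : rank W c ≤ i) :
    c < (W.sort (· ≤ ·)).getD i 0 := by
  set s := W.sort (· ≤ ·)
  by_contra hcle
  push_neg at hcle
  have hne : s.getD i 0 ≠ c := fun he => hc (he ▸ getD_mem hi)
  have hlt : s.getD i 0 < c := lt_of_le_of_ne hcle hne
  have hsub : insert (s.getD i 0) (W.filter (fun x => x < s.getD i 0)) ⊆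
      W.filter (fun x => x < c) := by
    intro x hx
    rcases Finset.mem_insert.1 hx with rfl | hx
    · exact Finset.mem_filter.2 ⟨getD_mem hi, hlt⟩
    · rcases Finset.mem_filter.1 hx with ⟨h1, h2⟩
      exact Finset.mem_filter.2 ⟨h1, lt_trans h2 hlt⟩
  have hcard := Finset.card_le_card hsub
  rw [Finset.card_insert_of_notMem (by simp)] at hcard
  have : rank W (s.getD i 0) + 1 ≤ rank W c := hcard
  rw [rank_getD hi] at this
  omega

lemma count_right_interior {c : ℝ} {i : ℕ} (hc : c ∉ W) (hi : i < W.card) (h : rank W c ≤ i) :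
    (W.filter (fun x => c < x ∧ x < (W.sort (· ≤ ·)).getD i 0)).card = i - rank W c := by
  set s := W.sort (· ≤ ·)
  have hcs : c < s.getD i 0 := lt_getD_of_rank_le hc hi h
  have heq : W.filter (fun x => c < x ∧ x < s.getD i 0) =
      W.filter (fun x => x < s.getD i 0) \ W.filter (fun x => x < c) := by
    ext x
    simp only [Finset.mem_filter, Finset.mem_sdiff, not_and]
    constructor
    · rintro ⟨h1, h2, h3⟩; exact ⟨⟨h1, h3⟩, fun _ => not_lt.2 h2.le⟩
    · rintro ⟨⟨h1, h2⟩, h3⟩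
      have hne : x ≠ c := fun he => hc (he ▸ h1)
      exact ⟨h1, lt_of_le_of_ne (not_lt.1 (h3 h1)) (Ne.symm hne), h2⟩
  rw [heq, Finset.card_sdiff_of_subset]
  · rw [← rank, ← rank, rank_getD hi]
  · intro x hx
    rcases Finset.mem_filter.1 hx with ⟨h1, h2⟩
    exact Finset.mem_filter.2 ⟨h1, lt_trans h2 hcs⟩

lemma count_left_interior {c : ℝ} {j : ℕ} (hj : j < W.card) (hjc : j < rank W c) :
    (W.filter (fun x => (W.sort (· ≤ ·)).getD j 0 < x ∧ x < c)).card = rank W c - j - 1 := by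
  set s := W.sort (· ≤ ·)
  have hsc : s.getD j 0 < c := getD_lt_of_lt_rank hj hjc
  have heq : W.filter (fun x => s.getD j 0 < x ∧ x < c) =
      W.filter (fun x => x < c) \ insert (s.getD j 0) (W.filter (fun x => x < s.getD j 0)) := by
    ext x
    simp only [Finset.mem_filter, Finset.mem_sdiff, Finset.mem_insert, not_or, not_and]
    constructor
    · rintro ⟨h1, h2, h3⟩
      exact ⟨⟨h1, h3⟩, ne_of_gt h2, fun _ => not_lt.2 h2.le⟩
    · rintro ⟨⟨h1, h2⟩, h3, h4⟩
      exact ⟨h1, lt_of_le_of_ne (not_lt.1 (h4 h1)) (Ne.symm h3), h2⟩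
  rw [heq, Finset.card_sdiff_of_subset]
  · rw [Finset.card_insert_of_notMem (by simp), ← rank, ← rank, rank_getD hj]
    omega
  · intro x hx
    rcases Finset.mem_insert.1 hx with rfl | hx
    · exact Finset.mem_filter.2 ⟨getD_mem hj, hsc⟩
    · rcases Finset.mem_filter.1 hx with ⟨h1, h2⟩
      exact Finset.mem_filter.2 ⟨h1, lt_trans h2 hsc⟩

lemma count_right_all {c : ℝ} (hc : c ∉ W) :
    (W.filter (fun x => c < x)).card = W.card - rank W c := by
  have heq : W.filter (fun x => c < x) = W \ W.filter (fun x => x < c) := by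
    ext x
    simp only [Finset.mem_filter, Finset.mem_sdiff, not_and]
    constructor
    · rintro ⟨h1, h2⟩; exact ⟨h1, fun _ => not_lt.2 h2.le⟩
    · rintro ⟨h1, h2⟩
      have hne : x ≠ c := fun he => hc (he ▸ h1)
      exact ⟨h1, lt_of_le_of_ne (not_lt.1 (h2 h1)) (Ne.symm hne)⟩
  rw [heq, Finset.card_sdiff_of_subset (Finset.filter_subset _ _), rank]

end GreedyAux

set_option maxHeartbeats 1000000

/-- For a candidate `c ∈ K_t ∖ Ŵ_t` and all `r₁, r₂ ≥ 0`,
`d⁺_{r₁}(c) + d⁻_{r₂}(c) ≤ 2(r₁+r₂+1)/(k_t+2)`. -/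
theorem greedy_distance_bound
    (t : ℕ)
    (Ct : Finset ℝ) (hCt : ∀ x ∈ Ct, x ∈ Set.Ioo (t : ℝ) (t + 1))
    (kt : ℕ) (hkt : kt ≤ Ct.card)
    (w : ℕ → ℝ) (hw : IsGreedyCommittee t kt Ct w)
    (W : Finset ℝ) (hW : W = (Finset.Icc 2 (kt + 1)).image w)
    (c : ℝ) (hcK : c ∈ segmentMiddle t kt Ct) (hcW : c ∉ W)
    (r₁ r₂ : ℕ) :
    dPlus t kt W c r₁ + dMinus t W c r₂ ≤ 2 * ((r₁ : ℝ) + r₂ + 1) / ((kt : ℝ) + 2) := by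
  classical
  set K : ℝ := (kt : ℝ) + 2 with hKdef
  clear_value K
  have hK : (0:ℝ) < K := by rw [hKdef]; positivity
  have h2K : (0:ℝ) < 2*K := by linarith
  have hcK' := hcK
  simp only [segmentMiddle, Finset.mem_filter, ← hKdef] at hcK'
  obtain ⟨hcC, hcl, hcr⟩ := hcK'
  have h3pos : (0:ℝ) < 3/(2*K) := by positivity
  have hct : (t:ℝ) < c := by linarith
  have hct1 : c < (t:ℝ) + 1 := by linarith
  have h32l : (3:ℝ) < (c - (t:ℝ)) * (2*K) := by
    rw [← div_lt_iff₀ h2K]; linarith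
  have h32r : (3:ℝ) < ((t:ℝ) + 1 - c) * (2*K) := by
    rw [← div_lt_iff₀ h2K]; linarith
  -- injectivity of w on the index range
  have hinj : ∀ ξ ∈ Finset.Icc 2 (kt+1), ∀ ξ' ∈ Finset.Icc 2 (kt+1), w ξ = w ξ' → ξ = ξ' := by
    intro ξ hξ ξ' hξ' he
    by_contra hne
    have hξm := Finset.mem_Icc.1 hξ
    have hξm' := Finset.mem_Icc.1 hξ'
    rcases lt_or_gt_of_ne hne with h | h
    · apply (hw ξ' hξ').2.1
      rw [← he]
      exact Finset.mem_image_of_mem w (Finset.mem_Icc.2 ⟨hξm.1, by omega⟩)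
    · apply (hw ξ hξ).2.1
      rw [he]
      exact Finset.mem_image_of_mem w (Finset.mem_Icc.2 ⟨hξm'.1, by omega⟩)
  have hWcard : W.card = kt := by
    rw [hW, Finset.card_image_of_injOn, Nat.card_Icc]
    · omega
    · intro a ha b hb hab
      exact hinj a (Finset.mem_coe.1 ha) b (Finset.mem_coe.1 hb) hab
  have hWsub : ∀ x ∈ W, x ∈ Ct := by
    intro x hx
    rw [hW] at hx
    obtain ⟨ξ, hξ, rfl⟩ := Finset.mem_image.1 hx
    exact (hw ξ hξ).1
  have hWlt : ∀ x ∈ W, (t:ℝ) < x ∧ x < (t:ℝ)+1 := by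
    intro x hx
    have := hCt x (hWsub x hx)
    exact ⟨this.1, this.2⟩
  have hrle : rank W c ≤ kt := by
    rw [← hWcard]; exact GreedyAux.rank_le_card c
  -- positivity and bounds for dPlus / dMinus
  have hdp_pos : 0 < dPlus t kt W c r₁ := by
    simp only [dPlus]
    split_ifs with h
    · have := GreedyAux.lt_getD_of_rank_le hcW
        (show rank W c + r₁ < W.card by rw [hWcard]; omega) (by omega)
      linarith
    · linarith
  have hdp_le : dPlus t kt W c r₁ ≤ (t:ℝ)+1 - c := by
    simp only [dPlus]
    split_ifs with h
    · have hmem := GreedyAux.getD_mem (W := W) (i := rank W c + r₁)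
        (by rw [hWcard]; omega)
      have := (hWlt _ hmem).2
      linarith
    · linarith
  have hdm_pos : 0 < dMinus t W c r₂ := by
    simp only [dMinus]
    split_ifs with h
    · have := GreedyAux.getD_lt_of_lt_rank (W := W) (c := c)
        (i := rank W c - r₂ - 1) (by rw [hWcard]; omega) (by omega)
      linarith
    · linarith
  have hdm_le : dMinus t W c r₂ ≤ c - (t:ℝ) := by
    simp only [dMinus]
    split_ifs with h
    · have hmem := GreedyAux.getD_mem (W := W) (i := rank W c - r₂ - 1)
        (by rw [hWcard]; omega)
      have := (hWlt _ hmem).1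
      linarith
    · linarith
  -- counting committee members strictly inside the window
  have hRL : (W.filter (fun x => c - dMinus t W c r₂ < x ∧ x < c)).card ≤ r₂ := by
    by_cases h : r₂ + 1 ≤ rank W c
    · have hj : rank W c - r₂ - 1 < W.card := by rw [hWcard]; omega
      have hcd : c - dMinus t W c r₂ = (W.sort (· ≤ ·)).getD (rank W c - r₂ - 1) 0 := by
        simp only [dMinus, if_pos h]; ring
      simp only [hcd]
      rw [GreedyAux.count_left_interior hj (by omega)]
      omega
    · have hsub : W.filter (fun x => c - dMinus t W c r₂ < x ∧ x < c) ⊆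
          W.filter (fun x => x < c) := by
        intro x hx
        rcases Finset.mem_filter.1 hx with ⟨h1, _, h3⟩
        exact Finset.mem_filter.2 ⟨h1, h3⟩
      have h1 := Finset.card_le_card hsub
      have h2 : (W.filter (fun x => x < c)).card = rank W c := rfl
      omega
  have hRR : (W.filter (fun x => c < x ∧ x < c + dPlus t kt W c r₁)).card ≤ r₁ := by
    by_cases h : rank W c + r₁ < kt
    · have hi : rank W c + r₁ < W.card := by rw [hWcard]; omega
      have hcd : c + dPlus t kt W c r₁ = (W.sort (· ≤ ·)).getD (rank W c + r₁) 0 := by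
        simp only [dPlus, if_pos h]; ring
      simp only [hcd]
      rw [GreedyAux.count_right_interior hcW hi (by omega)]
      omega
    · have hsub : W.filter (fun x => c < x ∧ x < c + dPlus t kt W c r₁) ⊆
          W.filter (fun x => c < x) := by
        intro x hx
        rcases Finset.mem_filter.1 hx with ⟨h1, h2, _⟩
        exact Finset.mem_filter.2 ⟨h1, h2⟩
      have h1 := Finset.card_le_card hsub
      rw [GreedyAux.count_right_all hcW, hWcard] at h1
      omega
  -- the key greedy property
  have key : ∀ ξ ∈ Finset.Icc 2 (kt+1),
      w ξ ∈ W ∧ w ξ ≠ c ∧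
      ((2 * markedPoint t kt ξ - c ≤ w ξ ∧ w ξ ≤ c) ∨
       (c ≤ w ξ ∧ w ξ ≤ 2 * markedPoint t kt ξ - c)) := by
    intro ξ hξ
    have hmemW : w ξ ∈ W := by rw [hW]; exact Finset.mem_image_of_mem w hξ
    have hne : w ξ ≠ c := fun he => hcW (he ▸ hmemW)
    have havail : c ∉ (Finset.Icc 2 (ξ-1)).image w := by
      intro hmem
      apply hcW
      rw [hW]
      obtain ⟨a, ha, hae⟩ := Finset.mem_image.1 hmem
      have hξ' := Finset.mem_Icc.1 hξ
      have ha' := Finset.mem_Icc.1 ha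
      exact Finset.mem_image.2 ⟨a, Finset.mem_Icc.2 ⟨ha'.1, by omega⟩, hae⟩
    have habs := (hw ξ hξ).2.2 c hcC havail
    rcases le_total (markedPoint t kt ξ) c with hmc | hmc
    · rw [abs_of_nonneg (show (0:ℝ) ≤ c - markedPoint t kt ξ by linarith)] at habs
      have h2 := abs_le.1 habs
      exact ⟨hmemW, hne, Or.inl ⟨by linarith [h2.1], by linarith [h2.2]⟩⟩
    · rw [abs_of_nonpos (show c - markedPoint t kt ξ ≤ 0 by linarith)] at habs
      have h2 := abs_le.1 habs
      exact ⟨hmemW, hne, Or.inr ⟨by linarith [h2.1], by linarith [h2.2]⟩⟩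
  -- the doubly-boundary case is handled directly
  by_cases hbb : ¬(r₂ + 1 ≤ rank W c) ∧ ¬(rank W c + r₁ < kt)
  · obtain ⟨hbL, hbR⟩ := hbb
    have hdp : dPlus t kt W c r₁ = (t:ℝ)+1 - c := by simp only [dPlus, if_neg hbR]
    have hdm : dMinus t W c r₂ = c - (t:ℝ) := by simp only [dMinus, if_neg hbL]
    rw [hdp, hdm]
    have hkle : (kt:ℝ) ≤ (r₁:ℝ) + r₂ := by
      have : kt ≤ r₁ + r₂ := by omega
      exact_mod_cast this
    rw [le_div_iff₀ hK]
    linarith [hK]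
  rw [not_and_or, not_not, not_not] at hbb
  by_contra hcon
  push_neg at hcon
  have hcon' : 2*((r₁:ℝ)+r₂+1) < (dPlus t kt W c r₁ + dMinus t W c r₂) * K := by
    rw [← div_lt_iff₀ hK]; exact hcon
  set A : ℝ := if r₂ + 1 ≤ rank W c then
      K*(c-(t:ℝ)) - K*(dMinus t W c r₂)/2 + 1/2 else 1 with hAdef
  clear_value A
  set B : ℝ := if rank W c + r₁ < kt then
      K*(c-(t:ℝ)) + K*(dPlus t kt W c r₁)/2 + 1/2 else K with hBdef
  clear_value B
  have hA1 : 1 ≤ A := by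
    rw [hAdef]
    split_ifs with h
    · linarith [mul_le_mul_of_nonneg_left hdm_le hK.le, h32l]
    · exact le_refl 1
  have hB1 : B ≤ K := by
    rw [hBdef]
    split_ifs with h
    · linarith [mul_le_mul_of_nonneg_left hdp_le hK.le, h32r]
    · exact le_refl K
  have hAB : A + ((r₁:ℝ) + r₂ + 1) < B := by
    by_cases hL : r₂ + 1 ≤ rank W c
    · by_cases hR : rank W c + r₁ < kt
      · rw [hAdef, hBdef, if_pos hL, if_pos hR]
        linarith [hcon']
      · rw [hAdef, hBdef, if_pos hL, if_neg hR]
        have hdp : dPlus t kt W c r₁ = (t:ℝ)+1 - c := by simp only [dPlus, if_neg hR]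
        rw [hdp] at hcon'
        linarith [h32r, hcon', mul_le_mul_of_nonneg_left hdm_le hK.le]
    · have hR : rank W c + r₁ < kt := hbb.resolve_left hL
      rw [hAdef, hBdef, if_neg hL, if_pos hR]
      have hdm : dMinus t W c r₂ = c - (t:ℝ) := by simp only [dMinus, if_neg hL]
      rw [hdm] at hcon'
      linarith [h32l, hcon', mul_le_mul_of_nonneg_left hdp_le hK.le]
  have hA0 : (0:ℝ) ≤ A := by linarith
  set G : Finset ℕ := Finset.Icc (⌊A⌋₊ + 1) (⌊A⌋₊ + (r₁ + r₂ + 1)) with hGdef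
  clear_value G
  have hGcard : G.card = r₁ + r₂ + 1 := by rw [hGdef, Nat.card_Icc]; omega
  have hGprop : ∀ ξ ∈ G, (A < (ξ:ℝ)) ∧ ((ξ:ℝ) < B) ∧ ξ ∈ Finset.Icc 2 (kt+1) := by
    intro ξ hξ
    rw [hGdef, Finset.mem_Icc] at hξ
    have h1 : A < (ξ:ℝ) := by
      calc A < ⌊A⌋₊ + 1 := Nat.lt_floor_add_one A
      _ ≤ (ξ:ℝ) := by exact_mod_cast hξ.1
    have h2 : (ξ:ℝ) < B := by
      have ha : (ξ:ℝ) ≤ (⌊A⌋₊:ℝ) + ((r₁:ℝ) + r₂ + 1) := by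
        have := hξ.2
        push_cast
        exact_mod_cast this
      have hb := Nat.floor_le hA0
      linarith
    refine ⟨h1, h2, Finset.mem_Icc.2 ⟨?_, ?_⟩⟩
    · have hx : (1:ℝ) < (ξ:ℝ) := lt_of_le_of_lt hA1 h1
      have : 1 < ξ := by exact_mod_cast hx
      omega
    · have hx : (ξ:ℝ) < K := lt_of_lt_of_le h2 hB1
      rw [hKdef] at hx
      have : ξ < kt + 2 := by exact_mod_cast hx
      omega
  set Region : Finset ℝ := W.filter (fun x =>
      (c - dMinus t W c r₂ < x ∧ x < c) ∨ (c < x ∧ x < c + dPlus t kt W c r₁)) with hRegdef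
  clear_value Region
  have hmem : ∀ ξ ∈ G, w ξ ∈ Region := by
    intro ξ hξG
    obtain ⟨hξA, hξB, hξIcc⟩ := hGprop ξ hξG
    obtain ⟨hmemW, hne, hdisj⟩ := key ξ hξIcc
    have hwt := hWlt _ hmemW
    rw [hRegdef]
    refine Finset.mem_filter.2 ⟨hmemW, ?_⟩
    rcases hdisj with ⟨hge, hle⟩ | ⟨hge, hle⟩
    · left
      refine ⟨?_, lt_of_le_of_ne hle hne⟩
      by_cases hLc : r₂ + 1 ≤ rank W c
      · rw [hAdef, if_pos hLc] at hξA
        have hmval : markedPoint t kt ξ = (t:ℝ) + (2*(ξ:ℝ)-1)/(2*K) := by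
          rw [hKdef]; rfl
        have hm : c - dMinus t W c r₂ / 2 < markedPoint t kt ξ := by
          have h' : (c - dMinus t W c r₂/2 - (t:ℝ)) * (2*K) < 2*(ξ:ℝ)-1 := by
            linarith [hξA]
          have h'' := (lt_div_iff₀ h2K).2 h'
          rw [hmval]
          linarith
        linarith
      · have hdm : dMinus t W c r₂ = c - (t:ℝ) := by simp only [dMinus, if_neg hLc]
        rw [hdm]
        linarith [hwt.1]
    · right
      refine ⟨lt_of_le_of_ne hge (Ne.symm hne), ?_⟩
      by_cases hRc : rank W c + r₁ < kt
      · rw [hBdef, if_pos hRc] at hξB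
        have hmval : markedPoint t kt ξ = (t:ℝ) + (2*(ξ:ℝ)-1)/(2*K) := by
          rw [hKdef]; rfl
        have hm : markedPoint t kt ξ < c + dPlus t kt W c r₁ / 2 := by
          have h' : 2*(ξ:ℝ)-1 < (c + dPlus t kt W c r₁/2 - (t:ℝ)) * (2*K) := by
            linarith [hξB]
          have h'' := (div_lt_iff₀ h2K).2 h'
          rw [hmval]
          linarith
        linarith
      · have hdp : dPlus t kt W c r₁ = (t:ℝ)+1 - c := by simp only [dPlus, if_neg hRc]
        rw [hdp]
        linarith [hwt.2]
  have hinjG : Set.InjOn w ↑G := by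
    intro a ha b hb hab
    exact hinj a ((hGprop a (Finset.mem_coe.1 ha)).2.2) b
      ((hGprop b (Finset.mem_coe.1 hb)).2.2) hab
  have hcard := Finset.card_le_card_of_injOn w hmem hinjG
  have hRegion : Region.card ≤ r₁ + r₂ := by
    rw [hRegdef, Finset.filter_or]
    exact le_trans (Finset.card_union_le _ _) (by omega)
  omega
end

section
/- Fix a segment t ∈ {1,…,σ} of a uniform RIV model with segment probability p_t, a finite candidate set C_t ⊂ (t, t+1), and an integer k_t ≥ 0 with |C_t| ≥ k_t, and let Ŵ_t be the greedy committee for segment t. Then for every c ∈ K_t ∖ Ŵ_t and all integers ℓ ≥ 1 and 0 ≤ j ≤ ℓ−1, it holds that π(ℓ, c, j) ≤ 2 p_t ℓ² / (k_t + 2)². -/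
open MeasureTheory

private lemma sorted_filter_lt (W : Finset ℝ) (i : ℕ) (hi : i < W.card) :
    (W.filter (fun x => x < (W.sort (· ≤ ·)).getD i 0)).card ≤ i := by
  set L := W.sort (· ≤ ·) with hL
  have hlen : L.length = W.card := Finset.length_sort _
  have hiL : i < L.length := by omega
  have he : L.getD i 0 = L[i] := List.getD_eq_getElem L 0 hiL
  have hsorted := Finset.pairwise_sort (s := W) (r := (· ≤ ·))
  have hsub : W.filter (fun x => x < (W.sort (· ≤ ·)).getD i 0) ⊆ (L.take i).toFinset := by
    intro x hx
    rw [Finset.mem_filter] at hx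
    obtain ⟨hxW, hxlt⟩ := hx
    rw [he] at hxlt
    have hxL : x ∈ L := (Finset.mem_sort _).2 hxW
    obtain ⟨jj, hjj, hLjj⟩ := List.mem_iff_getElem.1 hxL
    have hji : jj < i := by
      by_contra hcon
      push_neg at hcon
      rcases eq_or_lt_of_le hcon with h | h
      · subst h; rw [hLjj] at hxlt; exact lt_irrefl _ hxlt
      · have := (List.pairwise_iff_getElem.1 hsorted) i jj hiL hjj h
        rw [hLjj] at this
        linarith
    have hjt : jj < (L.take i).length := by
      rw [List.length_take]; omega
    rw [List.mem_toFinset]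
    have : (L.take i)[jj] = x := by rw [List.getElem_take]; exact hLjj
    exact this ▸ List.getElem_mem _
  calc (W.filter (fun x => x < (W.sort (· ≤ ·)).getD i 0)).card
      ≤ (L.take i).toFinset.card := Finset.card_le_card hsub
    _ ≤ (L.take i).length := List.toFinset_card_le _
    _ ≤ i := by rw [List.length_take]; omega

private lemma sorted_filter_le (W : Finset ℝ) (i : ℕ) (hi : i < W.card) :
    i + 1 ≤ (W.filter (fun x => x ≤ (W.sort (· ≤ ·)).getD i 0)).card := by
  set L := W.sort (· ≤ ·) with hL
  have hlen : L.length = W.card := Finset.length_sort _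
  have hiL : i < L.length := by omega
  have he : L.getD i 0 = L[i] := List.getD_eq_getElem L 0 hiL
  have hsorted := Finset.pairwise_sort (s := W) (r := (· ≤ ·))
  have hsub : (L.take (i+1)).toFinset ⊆ W.filter (fun x => x ≤ (W.sort (· ≤ ·)).getD i 0) := by
    intro x hx
    rw [List.mem_toFinset] at hx
    obtain ⟨jj, hjj, hLjj⟩ := List.mem_iff_getElem.1 hx
    have hjjL : jj < L.length := by
      have := hjj; rw [List.length_take] at this; omega
    have hxL : x = L[jj] := by rw [← hLjj, List.getElem_take]
    have hji : jj ≤ i := by have := hjj; rw [List.length_take] at this; omega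
    rw [Finset.mem_filter]
    constructor
    · rw [← Finset.mem_sort (α := ℝ) (· ≤ ·)]
      exact hxL ▸ List.getElem_mem _
    · rw [he, hxL]
      rcases eq_or_lt_of_le hji with h | h
      · simp [h]
      · exact (List.pairwise_iff_getElem.1 hsorted) jj i hjjL hiL h
  have hnodup : (L.take (i+1)).Nodup := (List.take_sublist _ _).nodup (Finset.sort_nodup _ _)
  have hcard : (L.take (i+1)).toFinset.card = i + 1 := by
    rw [List.toFinset_card_of_nodup hnodup, List.length_take]; omega
  calc i + 1 = (L.take (i+1)).toFinset.card := hcard.symm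
    _ ≤ _ := Finset.card_le_card hsub


set_option maxHeartbeats 2000000 in
/-- For a candidate `c ∈ K_t ∖ Ŵ_t`, integers `ℓ ≥ 1` and `0 ≤ j ≤ ℓ−1`, the probability
`π(ℓ, c, j)` (that a random voter approves `c`, at most `j` elements of `Ŵ_t` strictly
to the left of `c`, and at most `ℓ−1−j` elements strictly to the right of `c`) is at
most `2 p_t ℓ² / (k_t + 2)²`. -/
theorem riv_pi_bound_middle
    (σ : ℕ) (p : ℕ → ℝ)
    (hp0 : ∀ t ∈ Finset.Icc 1 σ, 0 ≤ p t)
    (hpsum : ∑ t ∈ Finset.Icc 1 σ, p t = 1)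
    (t : ℕ) (ht : t ∈ Finset.Icc 1 σ)
    (Ct : Finset ℝ) (hCt : ∀ x ∈ Ct, x ∈ Set.Ioo (t : ℝ) (t + 1))
    (kt : ℕ) (hkt : kt ≤ Ct.card)
    (w : ℕ → ℝ) (hw : IsGreedyCommittee t kt Ct w)
    (W : Finset ℝ) (hW : W = (Finset.Icc 2 (kt + 1)).image w)
    (c : ℝ) (hcK : c ∈ segmentMiddle t kt Ct) (hcW : c ∉ W)
    (ℓ j : ℕ) (hℓ : 1 ≤ ℓ) (hj : j ≤ ℓ - 1) :
    rivMeasure σ p (approvalEvent W c j (ℓ - 1 - j)) ≤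
      ENNReal.ofReal (2 * p t * (ℓ : ℝ) ^ 2 / ((kt : ℝ) + 2) ^ 2) := by
  classical
  have hN : (0:ℝ) < (kt:ℝ) + 2 := by positivity
  rw [segmentMiddle, Finset.mem_filter] at hcK
  obtain ⟨hcC, hcl, hcr⟩ := hcK
  set r := ℓ - 1 - j with hrdef
  have hrj : r + j + 1 = ℓ := by omega
  have hrjR : (r:ℝ) + (j:ℝ) + 1 = (ℓ:ℝ) := by exact_mod_cast hrj
  have hpt0 : 0 ≤ p t := hp0 t ht
  -- injectivity of the committee map
  have hinj : Set.InjOn w ↑(Finset.Icc 2 (kt+1)) := by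
    intro ξ1 h1 ξ2 h2 heq
    rw [Finset.mem_coe, Finset.mem_Icc] at h1 h2
    by_contra hne
    rcases Nat.lt_or_ge ξ1 ξ2 with h | h
    · have h2' := (hw ξ2 (Finset.mem_Icc.2 h2)).2.1
      exact h2' (Finset.mem_image.2 ⟨ξ1, Finset.mem_Icc.2 ⟨h1.1, by omega⟩, heq⟩)
    · have hlt : ξ2 < ξ1 := by omega
      have h1' := (hw ξ1 (Finset.mem_Icc.2 h1)).2.1
      exact h1' (Finset.mem_image.2 ⟨ξ2, Finset.mem_Icc.2 ⟨h2.1, by omega⟩, heq.symm⟩)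
  have hWcard : W.card = kt := by
    rw [hW, Finset.card_image_of_injOn hinj, Nat.card_Icc]; omega
  have hwmem : ∀ ξ ∈ Finset.Icc 2 (kt+1), w ξ ∈ W := by
    intro ξ hξ; rw [hW]; exact Finset.mem_image_of_mem w hξ
  have hWIoo : ∀ x ∈ W, (t:ℝ) < x ∧ x < (t:ℝ)+1 := by
    intro x hx
    rw [hW, Finset.mem_image] at hx
    obtain ⟨ξ, hξ, rfl⟩ := hx
    exact ⟨(hCt _ (hw ξ hξ).1).1, (hCt _ (hw ξ hξ).1).2⟩
  have hclose : ∀ ξ ∈ Finset.Icc 2 (kt+1),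
      |w ξ - markedPoint t kt ξ| ≤ |c - markedPoint t kt ξ| := by
    intro ξ hξ
    refine (hw ξ hξ).2.2 c hcC ?_
    intro hc
    apply hcW
    rw [hW]
    refine Finset.mem_of_subset (Finset.image_subset_image ?_) hc
    exact Finset.Icc_subset_Icc le_rfl (by rw [Finset.mem_Icc] at hξ; omega)
  -- the rescaled position of c and the pivotal index
  set a : ℝ := (c - (t:ℝ)) * ((kt:ℝ) + 2) + 1/2 with hadef
  have hcl2 : 3 < (c - (t:ℝ)) * (2*((kt:ℝ)+2)) := by
    rw [← div_lt_iff₀ (by positivity)]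
    linarith
  have hcr2 : 3 < ((t:ℝ) + 1 - c) * (2*((kt:ℝ)+2)) := by
    rw [← div_lt_iff₀ (by positivity)]
    linarith
  have ha2 : 2 < a := by rw [hadef]; nlinarith [hcl2]
  have hak : a < (kt:ℝ) + 1 := by rw [hadef]; nlinarith [hcr2]
  set ξ₀ : ℕ := Nat.floor a + 1 with hxidef
  have hξ₀3 : 3 ≤ ξ₀ := by
    have : 2 ≤ Nat.floor a := Nat.le_floor (by exact_mod_cast ha2.le)
    omega
  have hξ₀top : ξ₀ ≤ kt + 1 := by
    have : Nat.floor a < kt + 1 := (Nat.floor_lt (by linarith)).2 (by exact_mod_cast hak)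
    omega
  have hxicast : ((ξ₀:ℕ):ℝ) = (Nat.floor a : ℝ) + 1 := by rw [hxidef]; push_cast; ring
  have haξlt : a < (ξ₀:ℝ) := by
    have h := Nat.lt_floor_add_one a
    linarith [hxicast]
  have haξge : (ξ₀:ℝ) - 1 ≤ a := by
    have h := Nat.floor_le (show (0:ℝ) ≤ a by linarith)
    linarith [hxicast]
  have hmc : ∀ ξ : ℕ, markedPoint t kt ξ - c = ((ξ:ℝ) - a)/((kt:ℝ)+2) := by
    intro ξ
    rw [markedPoint, hadef]
    field_simp
    ring
  set P : ℝ := (2*((ξ₀:ℝ) - a) + 2*(r:ℝ))/((kt:ℝ)+2) with hPdef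
  set M : ℝ := (2*(a - (ξ₀:ℝ) + 1) + 2*(j:ℝ))/((kt:ℝ)+2) with hMdef
  have hP0 : 0 ≤ P := by
    apply div_nonneg _ hN.le
    have : (0:ℝ) ≤ (r:ℝ) := Nat.cast_nonneg r
    linarith
  have hM0 : 0 ≤ M := by
    apply div_nonneg _ hN.le
    have : (0:ℝ) ≤ (j:ℝ) := Nat.cast_nonneg j
    linarith
  have hrkeq : rank W c = (W.filter (fun x => x < c)).card := rfl
  have hrankle : rank W c ≤ W.card := Finset.card_filter_le _ _
  have hgetmem : ∀ i, i < W.card → (W.sort (· ≤ ·)).getD i 0 ∈ W := by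
    intro i hi
    have hi' : i < (W.sort (· ≤ ·)).length := by
      rw [Finset.length_sort]; exact hi
    rw [List.getD_eq_getElem _ 0 hi']
    exact (Finset.mem_sort (α := ℝ) (· ≤ ·)).1 (List.getElem_mem hi')
  -- counting lemmas coming from the greedy construction
  have hcountR : ξ₀ + r ≤ kt + 1 →
      r + 1 ≤ (W.filter (fun x => c < x ∧ x ≤ c + P)).card := by
    intro hsm
    have hsubI : Finset.Icc ξ₀ (ξ₀ + r) ⊆ Finset.Icc 2 (kt+1) :=
      Finset.Icc_subset_Icc (by omega) hsm
    have hsub : (Finset.Icc ξ₀ (ξ₀+r)).image w ⊆ W.filter (fun x => c < x ∧ x ≤ c + P) := by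
      intro x hx
      rw [Finset.mem_image] at hx
      obtain ⟨ξ, hξ, rfl⟩ := hx
      have hξI : ξ ∈ Finset.Icc 2 (kt+1) := hsubI hξ
      rw [Finset.mem_Icc] at hξ
      have hmem := hwmem ξ hξI
      have hup : ((ξ:ℝ)) ≤ (ξ₀:ℝ) + r := by exact_mod_cast hξ.2
      have hlo : ((ξ₀:ℝ)) ≤ (ξ:ℝ) := by exact_mod_cast hξ.1
      have hmξ := hmc ξ
      have hmpos : 0 ≤ markedPoint t kt ξ - c := by
        rw [hmξ]; apply div_nonneg _ hN.le; linarith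
      have habs := hclose ξ hξI
      rw [abs_sub_comm c _, abs_of_nonneg hmpos] at habs
      have h1 := abs_le.1 habs
      have hne : w ξ ≠ c := fun h => hcW (h ▸ hmem)
      have hgt : c < w ξ := lt_of_le_of_ne (by linarith [h1.1]) (Ne.symm hne)
      refine Finset.mem_filter.2 ⟨hmem, hgt, ?_⟩
      have h2 : markedPoint t kt ξ - c ≤ (((ξ₀:ℝ) - a) + (r:ℝ))/((kt:ℝ)+2) := by
        rw [hmξ]
        gcongr
        linarith
      have hPeq : P = 2*((((ξ₀:ℝ) - a) + (r:ℝ))/((kt:ℝ)+2)) := by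
        rw [hPdef]; ring
      rw [hPeq]
      linarith [h1.2, h2]
    have hcard : ((Finset.Icc ξ₀ (ξ₀+r)).image w).card = r + 1 := by
      rw [Finset.card_image_of_injOn (hinj.mono (Finset.coe_subset.2 hsubI)), Nat.card_Icc]
      omega
    calc r + 1 = ((Finset.Icc ξ₀ (ξ₀+r)).image w).card := hcard.symm
      _ ≤ _ := Finset.card_le_card hsub
  have hcountL : j + 3 ≤ ξ₀ →
      j + 1 ≤ (W.filter (fun x => c - M ≤ x ∧ x < c)).card := by
    intro hsm
    have hsubI : Finset.Icc (ξ₀-1-j) (ξ₀-1) ⊆ Finset.Icc 2 (kt+1) :=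
      Finset.Icc_subset_Icc (by omega) (by omega)
    have hsub : (Finset.Icc (ξ₀-1-j) (ξ₀-1)).image w ⊆ W.filter (fun x => c - M ≤ x ∧ x < c) := by
      intro x hx
      rw [Finset.mem_image] at hx
      obtain ⟨ξ, hξ, rfl⟩ := hx
      have hξI : ξ ∈ Finset.Icc 2 (kt+1) := hsubI hξ
      rw [Finset.mem_Icc] at hξ
      have hmem := hwmem ξ hξI
      have hup : ((ξ:ℝ)) + 1 ≤ (ξ₀:ℝ) := by exact_mod_cast (show ξ + 1 ≤ ξ₀ by omega)
      have hlo : ((ξ₀:ℝ)) ≤ (ξ:ℝ) + (j:ℝ) + 1 := by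
        exact_mod_cast (show ξ₀ ≤ ξ + j + 1 by omega)
      have hmξ := hmc ξ
      have hmneg : 0 ≤ c - markedPoint t kt ξ := by
        have : markedPoint t kt ξ - c ≤ 0 := by
          rw [hmξ]
          apply div_nonpos_of_nonpos_of_nonneg _ hN.le
          linarith
        linarith
      have habs := hclose ξ hξI
      rw [abs_sub_comm c _, abs_of_nonpos (by linarith : markedPoint t kt ξ - c ≤ 0)] at habs
      have h1 := abs_le.1 habs
      have hne : w ξ ≠ c := fun h => hcW (h ▸ hmem)
      have hlt : w ξ < c := lt_of_le_of_ne (by linarith [h1.2]) hne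
      refine Finset.mem_filter.2 ⟨hmem, ?_, hlt⟩
      have h2 : c - markedPoint t kt ξ ≤ ((a - (ξ₀:ℝ) + 1) + (j:ℝ))/((kt:ℝ)+2) := by
        have : c - markedPoint t kt ξ = (a - (ξ:ℝ))/((kt:ℝ)+2) := by
          rw [show c - markedPoint t kt ξ = -(markedPoint t kt ξ - c) by ring, hmξ]; ring
        rw [this]
        gcongr
        linarith
      have hMeq : M = 2*(((a - (ξ₀:ℝ) + 1) + (j:ℝ))/((kt:ℝ)+2)) := by
        rw [hMdef]; ring
      rw [hMeq]
      linarith [h1.1, h2]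
    have hcard : ((Finset.Icc (ξ₀-1-j) (ξ₀-1)).image w).card = j + 1 := by
      rw [Finset.card_image_of_injOn (hinj.mono (Finset.coe_subset.2 hsubI)), Nat.card_Icc]
      omega
    calc j + 1 = ((Finset.Icc (ξ₀-1-j) (ξ₀-1)).image w).card := hcard.symm
      _ ≤ _ := Finset.card_le_card hsub
  -- arithmetic bounds in the boundary cases
  have harithP : kt + 2 ≤ ξ₀ + r → (t:ℝ) + 1 - c ≤ P := by
    intro hbig
    have hbigR : (kt:ℝ) + 2 ≤ (ξ₀:ℝ) + r := by exact_mod_cast hbig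
    have hξtopR : (ξ₀:ℝ) ≤ (kt:ℝ) + 1 := by exact_mod_cast hξ₀top
    have hceq : (t:ℝ)+1 - c = (2*((kt:ℝ)+2) - 2*a + 1)/(2*((kt:ℝ)+2)) := by
      field_simp [hadef]
      ring
    rw [hceq, hPdef, div_le_div_iff₀ (by linarith) hN]
    nlinarith [hbigR, hξtopR, haξlt, hN]
  have harithM : ξ₀ ≤ j + 2 → c - (t:ℝ) ≤ M := by
    intro hsml
    have hsmlR : (ξ₀:ℝ) ≤ (j:ℝ) + 2 := by exact_mod_cast hsml
    have hceq : c - (t:ℝ) = (2*a - 1)/(2*((kt:ℝ)+2)) := by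
      field_simp [hadef]
      ring
    rw [hceq, hMdef, div_le_div_iff₀ (by linarith) hN]
    nlinarith [hsmlR, ha2, hN]
  -- bounds on dPlus and dMinus
  have hdP : dPlus t kt W c r ≤ P := by
    rw [dPlus]
    split_ifs with hbr
    · have hiW : rank W c + r < W.card := by omega
      have heW : (W.sort (· ≤ ·)).getD (rank W c + r) 0 ∈ W := hgetmem _ hiW
      by_cases hsm : ξ₀ + r ≤ kt + 1
      · have hcnt := hcountR hsm
        have hP' : rank W c + r + 1 ≤ (W.filter (fun x => x ≤ c + P)).card := by
          have hdisj : Disjoint (W.filter (fun x => x < c))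
              (W.filter (fun x => c < x ∧ x ≤ c + P)) := by
            rw [Finset.disjoint_left]
            intro x hx1 hx2
            rw [Finset.mem_filter] at hx1 hx2
            linarith [hx1.2, hx2.2.1]
          have hsubU : (W.filter (fun x => x < c)) ∪ (W.filter (fun x => c < x ∧ x ≤ c + P))
              ⊆ W.filter (fun x => x ≤ c + P) := by
            intro x hx
            rcases Finset.mem_union.1 hx with h | h
            · rw [Finset.mem_filter] at h ⊢; exact ⟨h.1, by linarith [h.2]⟩
            · rw [Finset.mem_filter] at h ⊢; exact ⟨h.1, h.2.2⟩
          have hcu := Finset.card_union_of_disjoint hdisj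
          have hcc := Finset.card_le_card hsubU
          omega
        by_contra hcon
        push_neg at hcon
        have hsub2 : W.filter (fun x => x ≤ c + P) ⊆
            W.filter (fun x => x < (W.sort (· ≤ ·)).getD (rank W c + r) 0) := by
          intro x hx; rw [Finset.mem_filter] at hx ⊢; exact ⟨hx.1, by linarith [hx.2]⟩
        have h7 := sorted_filter_lt W (rank W c + r) hiW
        have h8 := Finset.card_le_card hsub2
        omega
      · have h9 := (hWIoo _ heW).2
        have h10 := harithP (by omega)
        linarith
    · by_cases hsm : ξ₀ + r ≤ kt + 1
      · exfalso
        have hcnt := hcountR hsm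
        have hsub3 : W.filter (fun x => c < x ∧ x ≤ c + P) ⊆ W.filter (fun x => ¬ x < c) := by
          intro x hx; rw [Finset.mem_filter] at hx ⊢
          exact ⟨hx.1, by push_neg; linarith [hx.2.1]⟩
        have h4 := Finset.card_le_card hsub3
        have h5 := Finset.card_filter_add_card_filter_not
          (s := W) (p := fun x => x < c)
        omega
      · exact harithP (by omega)
  have hdM : dMinus t W c j ≤ M := by
    rw [dMinus]
    split_ifs with hbr
    · have hiW : rank W c - j - 1 < W.card := by omega
      have heW : (W.sort (· ≤ ·)).getD (rank W c - j - 1) 0 ∈ W := hgetmem _ hiW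
      by_cases hsm : j + 3 ≤ ξ₀
      · have hcnt := hcountL hsm
        have hM' : (W.filter (fun x => x < c - M)).card + (j+1) ≤ rank W c := by
          have hdisj : Disjoint (W.filter (fun x => x < c - M))
              (W.filter (fun x => c - M ≤ x ∧ x < c)) := by
            rw [Finset.disjoint_left]
            intro x hx1 hx2
            rw [Finset.mem_filter] at hx1 hx2
            linarith [hx1.2, hx2.2.1]
          have hsubU : (W.filter (fun x => x < c - M)) ∪ (W.filter (fun x => c - M ≤ x ∧ x < c))
              ⊆ W.filter (fun x => x < c) := by
            intro x hx
            rcases Finset.mem_union.1 hx with h | h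
            · rw [Finset.mem_filter] at h ⊢; exact ⟨h.1, by linarith [h.2]⟩
            · rw [Finset.mem_filter] at h ⊢; exact ⟨h.1, h.2.2⟩
          have hcu := Finset.card_union_of_disjoint hdisj
          have hcc := Finset.card_le_card hsubU
          omega
        by_contra hcon
        push_neg at hcon
        have hsub2 : W.filter (fun x => x ≤ (W.sort (· ≤ ·)).getD (rank W c - j - 1) 0) ⊆
            W.filter (fun x => x < c - M) := by
          intro x hx; rw [Finset.mem_filter] at hx ⊢; exact ⟨hx.1, by linarith [hx.2]⟩
        have h7 := sorted_filter_le W (rank W c - j - 1) hiW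
        have h8 := Finset.card_le_card hsub2
        omega
      · have h9 := (hWIoo _ heW).1
        have h10 := harithM (by omega)
        linarith
    · by_cases hsm : j + 3 ≤ ξ₀
      · exfalso
        have hcnt := hcountL hsm
        have hsub3 : W.filter (fun x => c - M ≤ x ∧ x < c) ⊆ W.filter (fun x => x < c) := by
          intro x hx; rw [Finset.mem_filter] at hx ⊢; exact ⟨hx.1, hx.2.2⟩
        have h4 := Finset.card_le_card hsub3
        omega
      · exact harithM (by omega)
  -- containment of the event inside two rectangles
  have hsubE : approvalEvent W c j r ∩
      (Set.Icc (t:ℝ) ((t:ℝ)+1) ×ˢ Set.Icc (t:ℝ) ((t:ℝ)+1)) ⊆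
      (Set.Icc (c - M) c ×ˢ Set.Icc c (c + P)) ∪ (Set.Icc c (c + P) ×ˢ Set.Icc (c - M) c) := by
    rintro ⟨x, y⟩ ⟨hE, hsq⟩
    rw [Set.mem_prod] at hsq
    simp only [approvalEvent, Set.mem_setOf_eq] at hE
    obtain ⟨⟨hminc, hcmax⟩, hcntL', hcntR'⟩ := hE
    have hxI := hsq.1
    have hyI := hsq.2
    have htmin : (t:ℝ) ≤ min x y := le_min hxI.1 hyI.1
    have hmaxt : max x y ≤ (t:ℝ)+1 := max_le hxI.2 hyI.2
    have hminM : c - M ≤ min x y := by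
      have hdm : c - dMinus t W c j ≤ min x y := by
        rw [dMinus]
        split_ifs with hbr
        · have hiW : rank W c - j - 1 < W.card := by omega
          by_contra hcon
          push_neg at hcon
          have hcon' : min x y < (W.sort (· ≤ ·)).getD (rank W c - j - 1) 0 := by
            linarith
          have hS : j + 1 ≤ (W.filter (fun z =>
              (W.sort (· ≤ ·)).getD (rank W c - j - 1) 0 ≤ z ∧ z < c)).card := by
            have hsub4 : W.filter (fun z => z < c) ⊆
                W.filter (fun z => z < (W.sort (· ≤ ·)).getD (rank W c - j - 1) 0) ∪
                W.filter (fun z => (W.sort (· ≤ ·)).getD (rank W c - j - 1) 0 ≤ z ∧ z < c) := by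
              intro z hz
              rw [Finset.mem_filter] at hz
              rcases lt_or_ge z ((W.sort (· ≤ ·)).getD (rank W c - j - 1) 0) with h | h
              · exact Finset.mem_union_left _ (Finset.mem_filter.2 ⟨hz.1, h⟩)
              · exact Finset.mem_union_right _ (Finset.mem_filter.2 ⟨hz.1, h, hz.2⟩)
            have h5 := Finset.card_le_card hsub4
            have h6 := Finset.card_union_le
              (W.filter (fun z => z < (W.sort (· ≤ ·)).getD (rank W c - j - 1) 0))
              (W.filter (fun z => (W.sort (· ≤ ·)).getD (rank W c - j - 1) 0 ≤ z ∧ z < c))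
            have h7 := sorted_filter_lt W (rank W c - j - 1) hiW
            omega
          have hsub5 : W.filter (fun z =>
              (W.sort (· ≤ ·)).getD (rank W c - j - 1) 0 ≤ z ∧ z < c) ⊆
              W.filter (fun z => z < c ∧ min x y ≤ z ∧ z ≤ max x y) := by
            intro z hz
            rw [Finset.mem_filter] at hz ⊢
            exact ⟨hz.1, hz.2.2, le_of_lt (lt_of_lt_of_le hcon' hz.2.1),
              le_trans (le_of_lt hz.2.2) hcmax⟩
          have h11 := Finset.card_le_card hsub5
          omega
        · linarith
      linarith [hdM]
    have hmaxP : max x y ≤ c + P := by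
      have hdp : max x y ≤ c + dPlus t kt W c r := by
        rw [dPlus]
        split_ifs with hbr
        · have hiW : rank W c + r < W.card := by omega
          by_contra hcon
          push_neg at hcon
          have hcon' : (W.sort (· ≤ ·)).getD (rank W c + r) 0 < max x y := by linarith
          have hS : r + 1 ≤ (W.filter (fun z =>
              c < z ∧ z ≤ (W.sort (· ≤ ·)).getD (rank W c + r) 0)).card := by
            have hsub6 : W.filter (fun z => z ≤ (W.sort (· ≤ ·)).getD (rank W c + r) 0) ⊆
                W.filter (fun z => z < c) ∪
                W.filter (fun z => c < z ∧ z ≤ (W.sort (· ≤ ·)).getD (rank W c + r) 0) := by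
              intro z hz
              rw [Finset.mem_filter] at hz
              rcases lt_or_ge z c with h | h
              · exact Finset.mem_union_left _ (Finset.mem_filter.2 ⟨hz.1, h⟩)
              · have hzc : c < z := lt_of_le_of_ne h (fun hzc => hcW (hzc ▸ hz.1))
                exact Finset.mem_union_right _ (Finset.mem_filter.2 ⟨hz.1, hzc, hz.2⟩)
            have h5 := Finset.card_le_card hsub6
            have h6 := Finset.card_union_le
              (W.filter (fun z => z < c))
              (W.filter (fun z => c < z ∧ z ≤ (W.sort (· ≤ ·)).getD (rank W c + r) 0))
            have h7 := sorted_filter_le W (rank W c + r) hiW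
            omega
          have hsub7 : W.filter (fun z =>
              c < z ∧ z ≤ (W.sort (· ≤ ·)).getD (rank W c + r) 0) ⊆
              W.filter (fun z => c < z ∧ min x y ≤ z ∧ z ≤ max x y) := by
            intro z hz
            rw [Finset.mem_filter] at hz ⊢
            exact ⟨hz.1, hz.2.1, le_trans hminc (le_of_lt hz.2.1),
              le_of_lt (lt_of_le_of_lt hz.2.2 hcon')⟩
          have h11 := Finset.card_le_card hsub7
          omega
        · linarith
      linarith [hdP]
    rcases le_total x y with hxy | hxy
    · left
      rw [Set.mem_prod]
      rw [min_eq_left hxy] at hminM hminc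
      rw [max_eq_right hxy] at hmaxP hcmax
      exact ⟨⟨hminM, hminc⟩, hcmax, hmaxP⟩
    · right
      rw [Set.mem_prod]
      rw [min_eq_right hxy] at hminM hminc
      rw [max_eq_left hxy] at hmaxP hcmax
      exact ⟨⟨hcmax, hmaxP⟩, hminM, hminc⟩
  -- the product bound
  have hMP : M * P ≤ (ℓ:ℝ)^2/((kt:ℝ)+2)^2 := by
    have hnum : (2*(a - (ξ₀:ℝ) + 1) + 2*(j:ℝ)) * (2*((ξ₀:ℝ) - a) + 2*(r:ℝ)) ≤ (ℓ:ℝ)^2 := by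
      nlinarith [sq_nonneg ((2*(a - (ξ₀:ℝ) + 1) + 2*(j:ℝ)) - (2*((ξ₀:ℝ) - a) + 2*(r:ℝ))), hrjR]
    rw [hMdef, hPdef, div_mul_div_comm]
    rw [div_le_div_iff₀ (by positivity) (by positivity)]
    nlinarith [mul_le_mul_of_nonneg_right hnum (sq_nonneg ((kt:ℝ)+2))]
  -- measure computation
  have hsq_meas : ∀ u : ℕ,
      MeasurableSet ((Set.Icc (u:ℝ) ((u:ℝ)+1)) ×ˢ (Set.Icc (u:ℝ) ((u:ℝ)+1))) :=
    fun u => measurableSet_Icc.prod measurableSet_Icc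
  have happly : ∀ u : ℕ,
      ((volume.restrict (Set.Icc (u:ℝ) ((u:ℝ)+1))).prod
        (volume.restrict (Set.Icc (u:ℝ) ((u:ℝ)+1)))) (approvalEvent W c j r)
      = (volume.prod volume) (approvalEvent W c j r ∩
          ((Set.Icc (u:ℝ) ((u:ℝ)+1)) ×ˢ (Set.Icc (u:ℝ) ((u:ℝ)+1)))) := by
    intro u
    rw [Measure.prod_restrict, Measure.restrict_apply' (hsq_meas u)]
  rw [rivMeasure, Measure.finset_sum_apply]
  have hzero : ∀ u ∈ Finset.Icc 1 σ, u ≠ t →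
      (ENNReal.ofReal (p u) •
        ((volume.restrict (Set.Icc (u:ℝ) ((u:ℝ)+1))).prod
          (volume.restrict (Set.Icc (u:ℝ) ((u:ℝ)+1))))) (approvalEvent W c j r) = 0 := by
    intro u hu hne
    rw [Measure.smul_apply, happly u]
    have hempty : approvalEvent W c j r ∩
        ((Set.Icc (u:ℝ) ((u:ℝ)+1)) ×ˢ (Set.Icc (u:ℝ) ((u:ℝ)+1))) = ∅ := by
      rw [Set.eq_empty_iff_forall_notMem]
      rintro ⟨x, y⟩ ⟨hE, hsq⟩
      rw [Set.mem_prod] at hsq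
      simp only [approvalEvent, Set.mem_setOf_eq] at hE
      have hminc := hE.1.1
      have hcmax := hE.1.2
      have h3N : (0:ℝ) < 3/(2*((kt:ℝ)+2)) := by positivity
      rcases lt_or_gt_of_ne hne with h | h
      · have hle : (u:ℝ) + 1 ≤ (t:ℝ) := by exact_mod_cast Nat.succ_le_of_lt h
        have hm : max x y ≤ (u:ℝ)+1 := max_le hsq.1.2 hsq.2.2
        linarith
      · have hle : (t:ℝ) + 1 ≤ (u:ℝ) := by exact_mod_cast h
        have hm : (u:ℝ) ≤ min x y := le_min hsq.1.1 hsq.2.1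
        linarith
    rw [hempty, measure_empty, smul_zero]
  rw [Finset.sum_eq_single_of_mem t ht hzero]
  rw [Measure.smul_apply, happly t]
  have hle1 : (volume.prod volume) (approvalEvent W c j r ∩
      ((Set.Icc (t:ℝ) ((t:ℝ)+1)) ×ˢ (Set.Icc (t:ℝ) ((t:ℝ)+1)))) ≤
      ENNReal.ofReal M * ENNReal.ofReal P + ENNReal.ofReal P * ENNReal.ofReal M := by
    refine le_trans (measure_mono hsubE) ?_
    refine le_trans (measure_union_le _ _) ?_
    have hv1 : (volume.prod volume) (Set.Icc (c-M) c ×ˢ Set.Icc c (c+P)) =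
        ENNReal.ofReal M * ENNReal.ofReal P := by
      rw [Measure.prod_prod, Real.volume_Icc, Real.volume_Icc,
        show c - (c - M) = M by ring, show c + P - c = P by ring]
    have hv2 : (volume.prod volume) (Set.Icc c (c+P) ×ˢ Set.Icc (c-M) c) =
        ENNReal.ofReal P * ENNReal.ofReal M := by
      rw [Measure.prod_prod, Real.volume_Icc, Real.volume_Icc,
        show c - (c - M) = M by ring, show c + P - c = P by ring]
    rw [hv1, hv2]
  calc ENNReal.ofReal (p t) • (volume.prod volume) (approvalEvent W c j r ∩
      ((Set.Icc (t:ℝ) ((t:ℝ)+1)) ×ˢ (Set.Icc (t:ℝ) ((t:ℝ)+1))))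
      ≤ ENNReal.ofReal (p t) *
        (ENNReal.ofReal M * ENNReal.ofReal P + ENNReal.ofReal P * ENNReal.ofReal M) := by
        rw [smul_eq_mul]
        exact mul_le_mul_right hle1 _
    _ = ENNReal.ofReal (p t * (M * P + P * M)) := by
        rw [← ENNReal.ofReal_mul hM0, ← ENNReal.ofReal_mul hP0,
          ← ENNReal.ofReal_add (mul_nonneg hM0 hP0) (mul_nonneg hP0 hM0),
          ← ENNReal.ofReal_mul hpt0]
    _ ≤ ENNReal.ofReal (2 * p t * (ℓ:ℝ)^2 / ((kt:ℝ)+2)^2) := by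
        apply ENNReal.ofReal_le_ofReal
        have h12 : p t * (M * P) ≤ p t * ((ℓ:ℝ)^2/((kt:ℝ)+2)^2) :=
          mul_le_mul_of_nonneg_left hMP hpt0
        have h13 : p t * (M * P + P * M) = 2 * (p t * (M * P)) := by ring
        have h14 : 2 * p t * (ℓ:ℝ)^2 / ((kt:ℝ)+2)^2 = 2 * (p t * ((ℓ:ℝ)^2/((kt:ℝ)+2)^2)) := by
          ring
        rw [h13, h14]
        linarith
end

section
/- Fix a segment t ∈ {1,…,σ} of a uniform RIV model with segment probability p_t, a finite candidate set C_t ⊂ (t, t+1), an integer k ≥ 1, and set k_t = ⌊p_t k⌋; assume |C_t| ≥ k_t and let Ŵ_t be the greedy committee for segment t. Then for every c ∈ (C_t ∖ K_t) ∖ Ŵ_t and all integers 1 ≤ ℓ ≤ k and 0 ≤ j ≤ ℓ−1, it holds that π(ℓ, c, j) ≤ ℓ/k − 1/(4k). -/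
open MeasureTheory

set_option maxHeartbeats 1600000


lemma key_ineq_aux (r ℓ : ℕ) (q a X K : ℝ) (hq0 : 0 ≤ q)
    (ha0 : 0 < a) (hrl : r + 1 ≤ ℓ) (hX0 : 0 ≤ X)
    (hK : (r:ℝ) + 3 ≤ K) (hqK : q ≤ K - 1)
    (h2 : a ≤ 3/(2*K)) (h3 : X ≤ (2*(r:ℝ)+3)/K - 2*a) :
    2*q*a*X ≤ (ℓ:ℝ) - 1/4 := by
  have hl : (r:ℝ) + 1 ≤ (ℓ:ℝ) := by exact_mod_cast hrl
  have hr0 : (0:ℝ) ≤ (r:ℝ) := Nat.cast_nonneg r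
  have hK0 : (0:ℝ) < K := by linarith
  have hu : a * K ≤ 3/2 := by
    have h := mul_le_mul_of_nonneg_right h2 hK0.le
    have heq : 3/(2*K)*K = 3/2 := by field_simp
    linarith
  have hu0 : 0 < a * K := mul_pos ha0 hK0
  have hX3 : X * K ≤ 2*(r:ℝ)+3 - 2*(a*K) := by
    have h := mul_le_mul_of_nonneg_right h3 hK0.le
    have heq : ((2*(r:ℝ)+3)/K - 2*a) * K = 2*(r:ℝ)+3 - 2*(a*K) := by field_simp
    linarith
  have hXK0 : 0 ≤ X * K := mul_nonneg hX0 hK0.le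
  have huX : (a*K)*(X*K) ≤ (a*K)*(2*(r:ℝ)+3 - 2*(a*K)) :=
    mul_le_mul_of_nonneg_left hX3 hu0.le
  have main : 2*q*((a*K)*(X*K)) ≤ ((ℓ:ℝ) - 1/4) * K^2 := by
    rcases le_or_gt (r:ℕ) 1 with hr1 | hr2
    · have hr1' : (r:ℝ) ≤ 1 := by exact_mod_cast hr1
      have s1 : (a*K)*(X*K) ≤ (2*(r:ℝ)+3)^2/8 := by
        nlinarith [sq_nonneg (4*(a*K) - (2*(r:ℝ)+3))]
      have s2 : 2*q*((a*K)*(X*K)) ≤ 2*(K-1)*((2*(r:ℝ)+3)^2/8) := by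
        have h2q : 2*q ≤ 2*(K-1) := by linarith
        exact mul_le_mul h2q s1 (mul_nonneg hu0.le hXK0) (by linarith)
      have t1 : 4*(K-1)*(2*(r:ℝ)+3)^2 ≤ K^2*(2*(r:ℝ)+3)^2 := by
        have h4K : 4*(K-1) ≤ K^2 := by nlinarith [sq_nonneg (K-2)]
        exact mul_le_mul_of_nonneg_right h4K (sq_nonneg _)
      have t2 : K^2*(2*(r:ℝ)+3)^2 ≤ K^2*(16*(r:ℝ)+12) := by
        have hrr : (2*(r:ℝ)+3)^2 ≤ 16*(r:ℝ)+12 := by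
          nlinarith [mul_nonneg hr0 (by linarith : (0:ℝ) ≤ 1 - (r:ℝ))]
        exact mul_le_mul_of_nonneg_left hrr (sq_nonneg _)
      have t3 : K^2*(16*(r:ℝ)+12) ≤ K^2*(16*(ℓ:ℝ)-4) :=
        mul_le_mul_of_nonneg_left (by linarith) (sq_nonneg _)
      linarith
    · have hr2' : (2:ℝ) ≤ (r:ℝ) := by exact_mod_cast hr2
      have w1 : (0:ℝ) ≤ 3/2 - a*K := by linarith
      have w2 : (0:ℝ) ≤ 2*(r:ℝ) - 2*(a*K) := by linarith
      have s1 : (a*K)*(X*K) ≤ 3*(r:ℝ) := by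
        nlinarith [mul_nonneg w1 w2]
      have s2 : 2*q*((a*K)*(X*K)) ≤ 2*(K-1)*(3*(r:ℝ)) := by
        have h2q : 2*q ≤ 2*(K-1) := by linarith
        exact mul_le_mul h2q s1 (mul_nonneg hu0.le hXK0) (by linarith)
      have u1 : 6*(r:ℝ) ≤ ((r:ℝ)+3/4)*((r:ℝ)+3) := by
        nlinarith [sq_nonneg (2*(r:ℝ)-9/4)]
      have u2 : ((r:ℝ)+3/4)*((r:ℝ)+3) ≤ ((r:ℝ)+3/4)*K :=
        mul_le_mul_of_nonneg_left hK (by positivity)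
      have v1 : 6*(r:ℝ)*K ≤ ((r:ℝ)+3/4)*K^2 := by
        have h := mul_le_mul_of_nonneg_right (u1.trans u2) hK0.le
        nlinarith [h]
      have v2 : ((r:ℝ)+3/4)*K^2 ≤ ((ℓ:ℝ)-1/4)*K^2 :=
        mul_le_mul_of_nonneg_right (by linarith) (sq_nonneg _)
      nlinarith [mul_nonneg hr0 hK0.le]
  have heq2 : 2*q*a*X = (2*q*((a*K)*(X*K)))/K^2 := by field_simp
  rw [heq2, div_le_iff₀ (by positivity : (0:ℝ) < K^2)]
  exact main

lemma key_ineq (kt r ℓ : ℕ) (q a X : ℝ) (hq0 : 0 ≤ q) (hq : q < (kt:ℝ)+1)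
    (ha0 : 0 < a) (hrl : r + 1 ≤ ℓ) (hX0 : 0 ≤ X) (hX1 : X ≤ 1 - a)
    (hcase : kt ≤ r ∨ (r + 1 ≤ kt ∧ a ≤ 3/(2*((kt:ℝ)+2)) ∧
      X ≤ (2*(r:ℝ)+3)/((kt:ℝ)+2) - 2*a)) :
    2*q*a*X ≤ (ℓ:ℝ) - 1/4 := by
  have hl : (r:ℝ) + 1 ≤ (ℓ:ℝ) := by exact_mod_cast hrl
  rcases hcase with h | ⟨h1, h2, h3⟩
  · have hkr : (kt:ℝ) ≤ (r:ℝ) := by exact_mod_cast h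
    have h4 : a*X ≤ 1/4 := by nlinarith [sq_nonneg (2*a - 1)]
    nlinarith [mul_nonneg ha0.le hX0]
  · refine key_ineq_aux r ℓ q a X ((kt:ℝ)+2) hq0 ha0 hrl hX0 ?_ (by linarith) h2 h3
    have : (r:ℝ) + 1 ≤ (kt:ℝ) := by exact_mod_cast h1
    linarith

lemma riv_bound_aux (σ : ℕ) (p : ℕ → ℝ) (hp0 : ∀ s ∈ Finset.Icc 1 σ, 0 ≤ p s)
    (t : ℕ) (ht : t ∈ Finset.Icc 1 σ) (E : Set (ℝ × ℝ)) (c L' R' M : ℝ)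
    (hcl : (t:ℝ) < c) (hcr : c < (t:ℝ)+1)
    (hE : ∀ xy : ℝ × ℝ, xy ∈ E → min xy.1 xy.2 ≤ c ∧ c ≤ max xy.1 xy.2)
    (hsub : E ∩ (Set.Icc (t:ℝ) ((t:ℝ)+1) ×ˢ Set.Icc (t:ℝ) ((t:ℝ)+1)) ⊆
      (Set.Icc L' c ×ˢ Set.Icc c R') ∪ (Set.Icc c R' ×ˢ Set.Icc L' c))
    (hM : p t * ((c - L') * (R' - c) + (R' - c) * (c - L')) ≤ M)
    (hcL : L' ≤ c) (hcR : c ≤ R') : rivMeasure σ p E ≤ ENNReal.ofReal M := by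
  have hbox : ∀ s : ℕ, MeasurableSet (Set.Icc (s:ℝ) ((s:ℝ)+1) ×ˢ Set.Icc (s:ℝ) ((s:ℝ)+1)) :=
    fun s => measurableSet_Icc.prod measurableSet_Icc
  have happly : rivMeasure σ p E = ∑ s ∈ Finset.Icc 1 σ, ENNReal.ofReal (p s) *
      (volume.prod volume) (E ∩ (Set.Icc (s:ℝ) ((s:ℝ)+1) ×ˢ Set.Icc (s:ℝ) ((s:ℝ)+1))) := by
    rw [rivMeasure, Measure.finset_sum_apply]
    refine Finset.sum_congr rfl fun s hs => ?_
    rw [Measure.smul_apply, smul_eq_mul, Measure.prod_restrict,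
      Measure.restrict_apply' (hbox s)]
  rw [happly, Finset.sum_eq_single_of_mem t ht ?side]
  case side =>
    intro s hs hst
    have hempty : E ∩ (Set.Icc (s:ℝ) ((s:ℝ)+1) ×ˢ Set.Icc (s:ℝ) ((s:ℝ)+1)) = ∅ := by
      rw [Set.eq_empty_iff_forall_notMem]
      rintro ⟨x, y⟩ ⟨hxE, hxB⟩
      obtain ⟨hx, hy⟩ := hxB
      obtain ⟨hmin, hmax⟩ := hE _ hxE
      rcases Nat.lt_or_ge s t with hlt | hge
      · have h1 : (s:ℝ) + 1 ≤ (t:ℝ) := by exact_mod_cast Nat.succ_le_of_lt hlt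
        have : max x y ≤ (s:ℝ)+1 := max_le hx.2 hy.2
        linarith
      · have hgt : t < s := lt_of_le_of_ne hge (Ne.symm hst)
        have h1 : (t:ℝ) + 1 ≤ (s:ℝ) := by exact_mod_cast Nat.succ_le_of_lt hgt
        have : (s:ℝ) ≤ min x y := le_min hx.1 hy.1
        linarith
    rw [hempty, measure_empty, mul_zero]
  · have hP : (volume.prod volume) (E ∩ (Set.Icc (t:ℝ) ((t:ℝ)+1) ×ˢ Set.Icc (t:ℝ) ((t:ℝ)+1))) ≤
        ENNReal.ofReal ((c - L') * (R' - c) + (R' - c) * (c - L')) := by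
      calc (volume.prod volume) (E ∩ _) ≤ (volume.prod volume)
            ((Set.Icc L' c ×ˢ Set.Icc c R') ∪ (Set.Icc c R' ×ˢ Set.Icc L' c)) :=
          measure_mono hsub
        _ ≤ (volume.prod volume) (Set.Icc L' c ×ˢ Set.Icc c R') +
            (volume.prod volume) (Set.Icc c R' ×ˢ Set.Icc L' c) := measure_union_le _ _
        _ = ENNReal.ofReal (c - L') * ENNReal.ofReal (R' - c) +
            ENNReal.ofReal (R' - c) * ENNReal.ofReal (c - L') := by
          rw [Measure.prod_prod, Measure.prod_prod, Real.volume_Icc, Real.volume_Icc]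
        _ = ENNReal.ofReal ((c - L') * (R' - c) + (R' - c) * (c - L')) := by
          rw [← ENNReal.ofReal_mul (by linarith), ← ENNReal.ofReal_mul (by linarith),
            ← ENNReal.ofReal_add (mul_nonneg (by linarith) (by linarith))
              (mul_nonneg (by linarith) (by linarith))]
    have step1 : ENNReal.ofReal (p t) *
        (volume.prod volume) (E ∩ (Set.Icc (t:ℝ) ((t:ℝ)+1) ×ˢ Set.Icc (t:ℝ) ((t:ℝ)+1))) ≤
        ENNReal.ofReal (p t) * ENNReal.ofReal ((c - L') * (R' - c) + (R' - c) * (c - L')) :=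
      mul_le_mul_right hP _
    have step2 : ENNReal.ofReal (p t) *
        ENNReal.ofReal ((c - L') * (R' - c) + (R' - c) * (c - L')) =
        ENNReal.ofReal (p t * ((c - L') * (R' - c) + (R' - c) * (c - L'))) := by
      rw [← ENNReal.ofReal_mul (hp0 t ht)]
    exact step1.trans (step2.le.trans (ENNReal.ofReal_le_ofReal hM))

/-- For `k_t = ⌊p_t k⌋` and a candidate `c ∈ (C_t ∖ K_t) ∖ Ŵ_t`, integers `1 ≤ ℓ ≤ k`
and `0 ≤ j ≤ ℓ−1`, the probability `π(ℓ, c, j)` (that a random voter approves `c`, at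
most `j` elements of `Ŵ_t` strictly to the left of `c`, and at most `ℓ−1−j` elements
strictly to the right of `c`) is at most `ℓ/k − 1/(4k)`. -/
theorem riv_pi_bound_edge
    (σ : ℕ) (p : ℕ → ℝ)
    (hp0 : ∀ t ∈ Finset.Icc 1 σ, 0 ≤ p t)
    (hpsum : ∑ t ∈ Finset.Icc 1 σ, p t = 1)
    (t : ℕ) (ht : t ∈ Finset.Icc 1 σ)
    (Ct : Finset ℝ) (hCt : ∀ x ∈ Ct, x ∈ Set.Ioo (t : ℝ) (t + 1))
    (k : ℕ) (hk : 1 ≤ k)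
    (kt : ℕ) (hktdef : kt = ⌊p t * (k : ℝ)⌋₊) (hkt : kt ≤ Ct.card)
    (w : ℕ → ℝ) (hw : IsGreedyCommittee t kt Ct w)
    (W : Finset ℝ) (hW : W = (Finset.Icc 2 (kt + 1)).image w)
    (c : ℝ) (hcCt : c ∈ Ct) (hcK : c ∉ segmentMiddle t kt Ct) (hcW : c ∉ W)
    (ℓ j : ℕ) (hℓ1 : 1 ≤ ℓ) (hℓk : ℓ ≤ k) (hj : j ≤ ℓ - 1) :
    rivMeasure σ p (approvalEvent W c j (ℓ - 1 - j)) ≤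
      ENNReal.ofReal ((ℓ : ℝ) / k - 1 / (4 * k)) := by
  set r := ℓ - 1 - j with hrdef
  clear_value r
  have hrl : r + 1 ≤ ℓ := by omega
  have hjl : j + 1 ≤ ℓ := by omega
  have hc := hCt c hcCt
  have hc0 : (t:ℝ) < c := hc.1
  have hc1 : c < (t:ℝ) + 1 := hc.2
  have hK0 : (0:ℝ) < (kt:ℝ) + 2 := by positivity
  have hk0 : (0:ℝ) < (k:ℝ) := by exact_mod_cast hk
  set q := p t * (k:ℝ) with hqdef
  clear_value q
  have hq0 : 0 ≤ q := by rw [hqdef]; exact mul_nonneg (hp0 t ht) (Nat.cast_nonneg k)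
  have hq1 : q < (kt:ℝ) + 1 := by
    rw [hktdef]
    exact Nat.lt_floor_add_one q
  have hpt : p t = q / (k:ℝ) := (eq_div_iff hk0.ne').mpr hqdef.symm
  -- greedy committee facts
  have hwmem : ∀ ξ ∈ Finset.Icc 2 (kt+1), w ξ ∈ W := fun ξ hξ => by
    rw [hW]; exact Finset.mem_image_of_mem w hξ
  have hne : ∀ ξ ∈ Finset.Icc 2 (kt+1), ∀ ξ' ∈ Finset.Icc 2 (kt+1), ξ < ξ' → w ξ ≠ w ξ' := by
    intro ξ hξ ξ' hξ' hlt heq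
    have h2 := (hw ξ' hξ').2.1
    apply h2
    apply Finset.mem_image.mpr
    exact ⟨ξ, Finset.mem_Icc.mpr ⟨(Finset.mem_Icc.mp hξ).1, by omega⟩, heq⟩
  have hclose : ∀ ξ ∈ Finset.Icc 2 (kt+1),
      |w ξ - markedPoint t kt ξ| ≤ |c - markedPoint t kt ξ| := by
    intro ξ hξ
    refine (hw ξ hξ).2.2 c hcCt ?_
    intro hmem
    apply hcW
    rw [hW]
    obtain ⟨x, hx, hxe⟩ := Finset.mem_image.mp hmem
    have hxm := Finset.mem_Icc.mp hx
    have hξm := Finset.mem_Icc.mp hξ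
    exact Finset.mem_image.mpr ⟨x, Finset.mem_Icc.mpr ⟨hxm.1, by omega⟩, hxe⟩
  have hmmono : ∀ ξ ξ' : ℕ, ξ ≤ ξ' → markedPoint t kt ξ ≤ markedPoint t kt ξ' := by
    intro ξ ξ' h
    unfold markedPoint
    have h1 : (ξ:ℝ) ≤ (ξ':ℝ) := by exact_mod_cast h
    have h2 : (2*(ξ:ℝ)-1)/(2*((kt:ℝ)+2)) ≤ (2*(ξ':ℝ)-1)/(2*((kt:ℝ)+2)) := by
      apply div_le_div_of_nonneg_right ?_ ?_ <;> first | linarith | positivity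
    linarith
  have hcK' : c ≤ (t:ℝ) + 3/(2*((kt:ℝ)+2)) ∨ (t:ℝ) + 1 - 3/(2*((kt:ℝ)+2)) ≤ c := by
    by_contra hcon
    push_neg at hcon
    exact hcK (Finset.mem_filter.mpr ⟨hcCt, hcon.1, hcon.2⟩)
  rcases hcK' with hA | hB
  · -- Case A: c in the left edge region; all committee members lie to the right of c
    have hwA : ∀ ξ ∈ Finset.Icc 2 (kt+1), c < w ξ ∧ w ξ ≤ 2*markedPoint t kt ξ - c := by
      intro ξ hξ
      have hξ2 : 2 ≤ ξ := (Finset.mem_Icc.mp hξ).1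
      have hcm : c ≤ markedPoint t kt ξ := by
        have h1 : (2:ℝ) ≤ (ξ:ℝ) := by exact_mod_cast hξ2
        have h2 : 3/(2*((kt:ℝ)+2)) ≤ (2*(ξ:ℝ)-1)/(2*((kt:ℝ)+2)) := by
          apply div_le_div_of_nonneg_right ?_ ?_ <;> first | linarith | positivity
        unfold markedPoint
        linarith
      have habs := hclose ξ hξ
      rw [abs_of_nonpos (by linarith : c - markedPoint t kt ξ ≤ 0)] at habs
      obtain ⟨hb1, hb2⟩ := abs_le.mp habs
      constructor
      · have hcw : c ≤ w ξ := by linarith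
        rcases eq_or_lt_of_le hcw with heq | hlt
        · exact absurd (by rw [heq]; exact hwmem ξ hξ) hcW
        · exact hlt
      · linarith
    rcases le_or_gt (r+1) kt with hr | hr
    · -- Subcase A1 : r + 1 ≤ kt
      have hr2 : r + 2 ∈ Finset.Icc 2 (kt+1) := Finset.mem_Icc.mpr ⟨by omega, by omega⟩
      have hcmr : c ≤ markedPoint t kt (r+2) := by
        have h2 : 3/(2*((kt:ℝ)+2)) ≤ (2*((r:ℝ)+2)-1)/(2*((kt:ℝ)+2)) := by
          apply div_le_div_of_nonneg_right ?_ ?_ <;> first | nlinarith [Nat.cast_nonneg (α := ℝ) r] | positivity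
        unfold markedPoint
        push_cast
        linarith
      set R' := min (2*markedPoint t kt (r+2) - c) ((t:ℝ)+1) with hR'def
      clear_value R'
      have hcR : c ≤ R' := by rw [hR'def]; exact le_min (by linarith) (by linarith)
      refine riv_bound_aux σ p hp0 t ht _ c (t:ℝ) R' _ hc0 hc1
        (fun xy hxy => hxy.1) ?_ ?_ hc0.le hcR
      · -- inclusion
        rintro ⟨x, y⟩ ⟨hxyE, hxyB⟩
        simp only [approvalEvent, Set.mem_setOf_eq] at hxyE
        obtain ⟨⟨hminc, hcmax⟩, hjc, hrc⟩ := hxyE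
        rw [Set.mem_prod] at hxyB
        obtain ⟨hx, hy⟩ := hxyB
        rw [Set.mem_Icc] at hx hy
        have hmaxR : max x y ≤ R' := by
          rw [hR'def]
          refine le_min ?_ (max_le hx.2 hy.2)
          by_contra hgt
          push_neg at hgt
          have hsubset : (Finset.Icc 2 (r+2)).image w ⊆
              W.filter (fun z => c < z ∧ min x y ≤ z ∧ z ≤ max x y) := by
            intro z hz
            obtain ⟨ξ, hξ, rfl⟩ := Finset.mem_image.mp hz
            have hξm := Finset.mem_Icc.mp hξ
            have hξ' : ξ ∈ Finset.Icc 2 (kt+1) := Finset.mem_Icc.mpr ⟨hξm.1, by omega⟩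
            obtain ⟨h1, h2⟩ := hwA ξ hξ'
            refine Finset.mem_filter.mpr ⟨hwmem ξ hξ', h1, le_trans hminc h1.le, ?_⟩
            have h3 := hmmono ξ (r+2) hξm.2
            linarith
          have hcard : r + 1 ≤
              (W.filter (fun z => c < z ∧ min x y ≤ z ∧ z ≤ max x y)).card := by
            have h1 : ((Finset.Icc 2 (r+2)).image w).card = r + 1 := by
              rw [Finset.card_image_of_injOn, Nat.card_Icc]
              · omega
              · intro ξ hξ ξ' hξ' heq
                rw [Finset.mem_coe, Finset.mem_Icc] at hξ hξ'
                by_contra hnee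
                rcases Nat.lt_or_ge ξ ξ' with hlt | hge
                · exact hne ξ (Finset.mem_Icc.mpr ⟨hξ.1, by omega⟩)
                    ξ' (Finset.mem_Icc.mpr ⟨hξ'.1, by omega⟩) hlt heq
                · exact hne ξ' (Finset.mem_Icc.mpr ⟨hξ'.1, by omega⟩)
                    ξ (Finset.mem_Icc.mpr ⟨hξ.1, by omega⟩) (by omega) heq.symm
            calc r + 1 = ((Finset.Icc 2 (r+2)).image w).card := h1.symm
              _ ≤ _ := Finset.card_le_card hsubset
          omega
        rcases le_total x y with hxy | hxy
        · refine Or.inl ⟨Set.mem_Icc.mpr ⟨hx.1, ?_⟩, Set.mem_Icc.mpr ⟨?_, ?_⟩⟩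
          · rwa [min_eq_left hxy] at hminc
          · rwa [max_eq_right hxy] at hcmax
          · rwa [max_eq_right hxy] at hmaxR
        · refine Or.inr ⟨Set.mem_Icc.mpr ⟨?_, ?_⟩, Set.mem_Icc.mpr ⟨hy.1, ?_⟩⟩
          · rwa [max_eq_left hxy] at hcmax
          · rwa [max_eq_left hxy] at hmaxR
          · rwa [min_eq_right hxy] at hminc
      · -- numeric bound
        set a := c - (t:ℝ) with hadef
        clear_value a
        set X := R' - c with hXdef
        clear_value X
        have hX0 : 0 ≤ X := by simp only [hXdef]; linarith
        have hX1 : X ≤ 1 - a := by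
          have := min_le_right (2*markedPoint t kt (r+2) - c) ((t:ℝ)+1)
          simp only [hXdef, hadef]
          rw [hR'def]
          linarith
        have hRv : 2*markedPoint t kt (r+2) - c - c = (2*(r:ℝ)+3)/((kt:ℝ)+2) - 2*a := by
          unfold markedPoint
          simp only [hadef]
          push_cast
          field_simp
          ring
        have hXB : X ≤ (2*(r:ℝ)+3)/((kt:ℝ)+2) - 2*a := by
          have := min_le_left (2*markedPoint t kt (r+2) - c) ((t:ℝ)+1)
          simp only [hXdef]
          rw [hR'def]
          linarith
        have hkey := key_ineq kt r ℓ q a X hq0 hq1 (by simp only [hadef]; linarith) hrl hX0 hX1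
          (Or.inr ⟨hr, by simp only [hadef]; linarith, hXB⟩)
        have heq : p t * (a * X + X * a) = (2*q*a*X)/(k:ℝ) := by
          rw [hpt]; ring
        rw [heq]
        rw [div_le_iff₀ hk0]
        have : ((ℓ:ℝ)/k - 1/(4*k)) * k = (ℓ:ℝ) - 1/4 := by field_simp
        rw [this]
        exact hkey
    · -- Subcase A2 : kt ≤ r
      refine riv_bound_aux σ p hp0 t ht _ c (t:ℝ) ((t:ℝ)+1) _ hc0 hc1
        (fun xy hxy => hxy.1) ?_ ?_ hc0.le hc1.le
      · rintro ⟨x, y⟩ ⟨hxyE, hxyB⟩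
        simp only [approvalEvent, Set.mem_setOf_eq] at hxyE
        obtain ⟨⟨hminc, hcmax⟩, hjc, hrc⟩ := hxyE
        rw [Set.mem_prod] at hxyB
        obtain ⟨hx, hy⟩ := hxyB
        rw [Set.mem_Icc] at hx hy
        rcases le_total x y with hxy | hxy
        · refine Or.inl ⟨Set.mem_Icc.mpr ⟨hx.1, ?_⟩, Set.mem_Icc.mpr ⟨?_, hy.2⟩⟩
          · rwa [min_eq_left hxy] at hminc
          · rwa [max_eq_right hxy] at hcmax
        · refine Or.inr ⟨Set.mem_Icc.mpr ⟨?_, hx.2⟩, Set.mem_Icc.mpr ⟨hy.1, ?_⟩⟩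
          · rwa [max_eq_left hxy] at hcmax
          · rwa [min_eq_right hxy] at hminc
      · set a := c - (t:ℝ) with hadef
        set X := (t:ℝ) + 1 - c with hXdef
        clear_value X
        have hkey := key_ineq kt r ℓ q a X hq0 hq1 (by simp only [hadef]; linarith) hrl
          (by simp only [hXdef]; linarith) (by simp only [hXdef, hadef]; linarith)
          (Or.inl (by omega))
        have heq : p t * (a * X + X * a) = (2*q*a*X)/(k:ℝ) := by
          rw [hpt]; ring
        rw [heq, div_le_iff₀ hk0]
        have : ((ℓ:ℝ)/k - 1/(4*k)) * k = (ℓ:ℝ) - 1/4 := by field_simp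
        rw [this]
        exact hkey
  · -- Case B: c in the right edge region; all committee members lie to the left of c
    have hmtop : markedPoint t kt (kt+1) = (t:ℝ)+1 - 3/(2*((kt:ℝ)+2)) := by
      unfold markedPoint
      push_cast
      field_simp
      ring
    have hwB : ∀ ξ ∈ Finset.Icc 2 (kt+1), w ξ < c ∧ 2*markedPoint t kt ξ - c ≤ w ξ := by
      intro ξ hξ
      have hξ2 := Finset.mem_Icc.mp hξ
      have hcm : markedPoint t kt ξ ≤ c := by
        have h1 := hmmono ξ (kt+1) hξ2.2
        rw [hmtop] at h1
        linarith
      have habs := hclose ξ hξ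
      rw [abs_of_nonneg (by linarith : 0 ≤ c - markedPoint t kt ξ)] at habs
      obtain ⟨hb1, hb2⟩ := abs_le.mp habs
      constructor
      · have hcw : w ξ ≤ c := by linarith
        rcases eq_or_lt_of_le hcw with heq | hlt
        · exact absurd (by rw [← heq]; exact hwmem ξ hξ) hcW
        · exact hlt
      · linarith
    rcases le_or_gt (j+1) kt with hjkt | hjkt
    · -- Subcase B1 : j + 1 ≤ kt
      have hlo : kt + 1 - j ∈ Finset.Icc 2 (kt+1) := Finset.mem_Icc.mpr ⟨by omega, by omega⟩
      set L := 2*markedPoint t kt (kt+1-j) - c with hLdef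
      clear_value L
      set b := (t:ℝ) + 1 - c with hbdef
      clear_value b
      have hLc : c - L = (2*(j:ℝ)+3)/((kt:ℝ)+2) - 2*b := by
        simp only [hLdef, hbdef]
        unfold markedPoint
        rw [Nat.cast_sub (by omega : j ≤ kt + 1)]
        push_cast
        field_simp
        ring
      have hb' : b ≤ 3/(2*((kt:ℝ)+2)) := by simp only [hbdef]; linarith
      have hj0 : (0:ℝ) ≤ (j:ℝ) := Nat.cast_nonneg j
      have hLle : L ≤ c := by
        have hbb : b*((kt:ℝ)+2) ≤ 3/2 := by
          have h := mul_le_mul_of_nonneg_right hb' hK0.le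
          have heq : 3/(2*((kt:ℝ)+2))*((kt:ℝ)+2) = 3/2 := by field_simp
          linarith
        have hfrac : 2*(j:ℝ)/((kt:ℝ)+2) ≤ (2*(j:ℝ)+3)/((kt:ℝ)+2) - 2*b := by
          rw [div_sub' hK0.ne', div_le_div_iff₀ hK0 hK0]
          nlinarith [mul_nonneg (by linarith : (0:ℝ) ≤ 3 - 2*(b*((kt:ℝ)+2))) hK0.le]
        have h0 : 0 ≤ 2*(j:ℝ)/((kt:ℝ)+2) := by positivity
        linarith [hLc, hfrac, h0]
      set L' := max L (t:ℝ) with hL'def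
      clear_value L'
      have hL'c : L' ≤ c := by rw [hL'def]; exact max_le hLle hc0.le
      refine riv_bound_aux σ p hp0 t ht _ c L' ((t:ℝ)+1) _ hc0 hc1
        (fun xy hxy => hxy.1) ?_ ?_ hL'c hc1.le
      · rintro ⟨x, y⟩ ⟨hxyE, hxyB⟩
        simp only [approvalEvent, Set.mem_setOf_eq] at hxyE
        obtain ⟨⟨hminc, hcmax⟩, hjc, hrc⟩ := hxyE
        rw [Set.mem_prod] at hxyB
        obtain ⟨hx, hy⟩ := hxyB
        rw [Set.mem_Icc] at hx hy
        have hminL : L' ≤ min x y := by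
          rw [hL'def]
          refine max_le ?_ (le_min hx.1 hy.1)
          by_contra hgt
          push_neg at hgt
          have hsubset : (Finset.Icc (kt+1-j) (kt+1)).image w ⊆
              W.filter (fun z => z < c ∧ min x y ≤ z ∧ z ≤ max x y) := by
            intro z hz
            obtain ⟨ξ, hξ, rfl⟩ := Finset.mem_image.mp hz
            have hξm := Finset.mem_Icc.mp hξ
            have hξ' : ξ ∈ Finset.Icc 2 (kt+1) := Finset.mem_Icc.mpr ⟨by omega, hξm.2⟩
            obtain ⟨h1, h2⟩ := hwB ξ hξ'
            refine Finset.mem_filter.mpr ⟨hwmem ξ hξ', h1, ?_, le_trans h1.le hcmax⟩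
            have h3 := hmmono (kt+1-j) ξ hξm.1
            simp only [hLdef] at hgt
            linarith
          have hcard : j + 1 ≤
              (W.filter (fun z => z < c ∧ min x y ≤ z ∧ z ≤ max x y)).card := by
            have h1 : ((Finset.Icc (kt+1-j) (kt+1)).image w).card = j + 1 := by
              rw [Finset.card_image_of_injOn, Nat.card_Icc]
              · omega
              · intro ξ hξ ξ' hξ' heq
                rw [Finset.mem_coe, Finset.mem_Icc] at hξ hξ'
                by_contra hnee
                rcases Nat.lt_or_ge ξ ξ' with hlt | hge
                · exact hne ξ (Finset.mem_Icc.mpr ⟨by omega, by omega⟩)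
                    ξ' (Finset.mem_Icc.mpr ⟨by omega, by omega⟩) hlt heq
                · exact hne ξ' (Finset.mem_Icc.mpr ⟨by omega, by omega⟩)
                    ξ (Finset.mem_Icc.mpr ⟨by omega, by omega⟩) (by omega) heq.symm
            calc j + 1 = ((Finset.Icc (kt+1-j) (kt+1)).image w).card := h1.symm
              _ ≤ _ := Finset.card_le_card hsubset
          omega
        rcases le_total x y with hxy | hxy
        · refine Or.inl ⟨Set.mem_Icc.mpr ⟨?_, ?_⟩, Set.mem_Icc.mpr ⟨?_, hy.2⟩⟩
          · have := min_eq_left hxy ▸ hminL; linarith [this]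
          · rwa [min_eq_left hxy] at hminc
          · rwa [max_eq_right hxy] at hcmax
        · refine Or.inr ⟨Set.mem_Icc.mpr ⟨?_, hx.2⟩, Set.mem_Icc.mpr ⟨?_, ?_⟩⟩
          · rwa [max_eq_left hxy] at hcmax
          · have := min_eq_right hxy ▸ hminL; linarith [this]
          · rwa [min_eq_right hxy] at hminc
      · set X := c - L' with hXdef
        have hX0 : 0 ≤ X := by simp only [hXdef]; linarith
        have hX1 : X ≤ 1 - b := by
          have := le_max_right L (t:ℝ)
          simp only [hXdef, hbdef, hL'def]
          linarith [le_max_right L (t:ℝ)]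
        have hXB : X ≤ (2*(j:ℝ)+3)/((kt:ℝ)+2) - 2*b := by
          have h1 := le_max_left L (t:ℝ)
          have h2 : X ≤ c - L := by simp only [hXdef, hL'def]; linarith
          linarith [hLc]
        have hkey := key_ineq kt j ℓ q b X hq0 hq1 (by simp only [hbdef]; linarith) hjl hX0 hX1
          (Or.inr ⟨hjkt, hb', hXB⟩)
        have heq : p t * (X * ((t:ℝ)+1 - c) + ((t:ℝ)+1 - c) * X) = (2*q*b*X)/(k:ℝ) := by
          rw [hpt, hbdef]; ring
        rw [heq, div_le_iff₀ hk0]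
        have : ((ℓ:ℝ)/k - 1/(4*k)) * k = (ℓ:ℝ) - 1/4 := by field_simp
        rw [this]
        exact hkey
    · -- Subcase B2 : kt ≤ j
      refine riv_bound_aux σ p hp0 t ht _ c (t:ℝ) ((t:ℝ)+1) _ hc0 hc1
        (fun xy hxy => hxy.1) ?_ ?_ hc0.le hc1.le
      · rintro ⟨x, y⟩ ⟨hxyE, hxyB⟩
        simp only [approvalEvent, Set.mem_setOf_eq] at hxyE
        obtain ⟨⟨hminc, hcmax⟩, hjc, hrc⟩ := hxyE
        rw [Set.mem_prod] at hxyB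
        obtain ⟨hx, hy⟩ := hxyB
        rw [Set.mem_Icc] at hx hy
        rcases le_total x y with hxy | hxy
        · refine Or.inl ⟨Set.mem_Icc.mpr ⟨hx.1, ?_⟩, Set.mem_Icc.mpr ⟨?_, hy.2⟩⟩
          · rwa [min_eq_left hxy] at hminc
          · rwa [max_eq_right hxy] at hcmax
        · refine Or.inr ⟨Set.mem_Icc.mpr ⟨?_, hx.2⟩, Set.mem_Icc.mpr ⟨hy.1, ?_⟩⟩
          · rwa [max_eq_left hxy] at hcmax
          · rwa [min_eq_right hxy] at hminc
      · set b := (t:ℝ) + 1 - c with hbdef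
        set X := c - (t:ℝ) with hXdef
        clear_value X
        have hkey := key_ineq kt j ℓ q b X hq0 hq1 (by simp only [hbdef]; linarith) hjl
          (by simp only [hXdef]; linarith) (by simp only [hXdef, hbdef]; linarith)
          (Or.inl (by omega))
        have heq : p t * (X * b + b * X) = (2*q*b*X)/(k:ℝ) := by
          rw [hpt]; ring
        rw [heq, div_le_iff₀ hk0]
        have : ((ℓ:ℝ)/k - 1/(4*k)) * k = (ℓ:ℝ) - 1/4 := by field_simp
        rw [this]
        exact hkey
end

section
/- Let X and Y be independent random variables, each uniformly distributed on [0,1]. For an integer i ≥ 0 let G_i = { j/2^i : j = 1,…,2^i }. Then for every integer r ≥ 1, Pr[ G_r ∩ [min(X,Y), max(X,Y)] ≠ ∅ and G_{r−1} ∩ [min(X,Y), max(X,Y)] = ∅ ] = 2^{−r}. -/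
open MeasureTheory ProbabilityTheory
open scoped ENNReal


lemma dyadic_key (s : ℕ) (x y : ℝ) (hx0 : 0 ≤ x) (hx1 : x ≤ 1) (hy0 : 0 ≤ y) (hy1 : y ≤ 1)
    (hxD : ∀ j : ℕ, x ≠ (j : ℝ) / 2 ^ (s + 1)) (hyD : ∀ j : ℕ, y ≠ (j : ℝ) / 2 ^ (s + 1)) :
    ((∃ j ∈ Finset.Icc (1 : ℕ) (2 ^ (s + 1)),
        min x y ≤ (j : ℝ) / 2 ^ (s + 1) ∧ (j : ℝ) / 2 ^ (s + 1) ≤ max x y) ∧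
      ¬ (∃ j ∈ Finset.Icc (1 : ℕ) (2 ^ s),
        min x y ≤ (j : ℝ) / 2 ^ s ∧ (j : ℝ) / 2 ^ s ≤ max x y))
    ↔ ∃ k ∈ Finset.range (2 ^ s),
        ((2 * k : ℝ) / 2 ^ (s + 1) < min x y ∧ min x y < (2 * k + 1) / 2 ^ (s + 1)) ∧
        ((2 * k + 1 : ℝ) / 2 ^ (s + 1) < max x y ∧ max x y < (2 * k + 2) / 2 ^ (s + 1)) := by
  have hc : (0 : ℝ) < 2 ^ (s + 1) := by positivity
  have hcs : (0 : ℝ) < 2 ^ s := by positivity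
  have hpow : (2 : ℝ) ^ (s + 1) = 2 * 2 ^ s := by rw [pow_succ]; ring
  set m := min x y with hm
  set M := max x y with hM
  have hmD : ∀ j : ℕ, m ≠ (j : ℝ) / 2 ^ (s + 1) := by
    rcases min_choice x y with h | h <;> rw [hm, h] <;> assumption
  have hMD : ∀ j : ℕ, M ≠ (j : ℝ) / 2 ^ (s + 1) := by
    rcases max_choice x y with h | h <;> rw [hM, h] <;> assumption
  have hm0 : 0 ≤ m := le_min hx0 hy0
  have hM1 : M ≤ 1 := max_le hx1 hy1
  have hmM : m ≤ M := min_le_max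
  have heq : ∀ t : ℕ, (t : ℝ) / 2 ^ s = (2 * t : ℝ) / 2 ^ (s + 1) := by
    intro t; rw [hpow]; field_simp
  constructor
  · rintro ⟨⟨j, hj, hmj, hjM⟩, h2⟩
    rw [Finset.mem_Icc] at hj
    have hmj' : m < (j : ℝ) / 2 ^ (s + 1) := lt_of_le_of_ne hmj (hmD j)
    have hjM' : (j : ℝ) / 2 ^ (s + 1) < M := lt_of_le_of_ne hjM (fun h => hMD j h.symm)
    rcases Nat.even_or_odd j with ⟨t, ht⟩ | ⟨k, hk⟩
    · exfalso
      apply h2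
      refine ⟨t, Finset.mem_Icc.mpr ⟨by omega, ?_⟩, ?_, ?_⟩
      · have : j ≤ 2 ^ (s + 1) := hj.2
        have : 2 ^ (s + 1) = 2 * 2 ^ s := by rw [pow_succ]; ring
        omega
      · rw [heq t]
        have : ((2 * t : ℕ) : ℝ) = (2 * t : ℝ) := by push_cast; ring
        calc m ≤ (j : ℝ) / 2 ^ (s + 1) := hmj
          _ = (2 * t : ℝ) / 2 ^ (s + 1) := by rw [ht]; push_cast; ring_nf
      · rw [heq t]
        calc (2 * t : ℝ) / 2 ^ (s + 1) = (j : ℝ) / 2 ^ (s + 1) := by rw [ht]; push_cast; ring_nf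
          _ ≤ M := hjM
    · -- j = 2k+1
      have hks : k < 2 ^ s := by
        have h1 : j ≤ 2 ^ (s + 1) := hj.2
        have h2' : 2 ^ (s + 1) = 2 * 2 ^ s := by rw [pow_succ]; ring
        omega
      have hjr : (j : ℝ) = 2 * k + 1 := by rw [hk]; push_cast; ring
      refine ⟨k, Finset.mem_range.mpr hks, ⟨?_, by rw [← hjr]; exact hmj'⟩,
        by rw [← hjr]; exact hjM', ?_⟩
      · -- 2k/2^(s+1) < m
        by_contra h
        push_neg at h
        rcases Nat.eq_zero_or_pos k with rfl | hk1
        · have : m ≤ 0 := by simpa using h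
          exact hmD 0 (by simp [le_antisymm this hm0])
        · apply h2
          refine ⟨k, Finset.mem_Icc.mpr ⟨hk1, hks.le⟩, ?_, ?_⟩
          · rw [heq k]; exact h
          · rw [heq k]
            have hlt : (2 * k : ℝ) / 2 ^ (s + 1) < (2 * k + 1) / 2 ^ (s + 1) := by
              gcongr <;> linarith
            refine le_of_lt ?_
            calc (2 * k : ℝ) / 2 ^ (s + 1) < (2 * k + 1) / 2 ^ (s + 1) := hlt
              _ = (j : ℝ) / 2 ^ (s + 1) := by rw [hjr]
              _ ≤ M := hjM
      · -- M < (2k+2)/2^(s+1)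
        by_contra h
        push_neg at h
        apply h2
        refine ⟨k + 1, Finset.mem_Icc.mpr ⟨by omega, by omega⟩, ?_, ?_⟩
        · rw [heq (k + 1)]
          push_cast
          have h5 : m < (2 * (k : ℝ) + 1) / 2 ^ (s + 1) := by rw [← hjr]; exact hmj'
          have h6 : (2 * (k : ℝ) + 1) / 2 ^ (s + 1) ≤ (2 * ((k : ℝ) + 1)) / 2 ^ (s + 1) := by
            gcongr <;> linarith
          linarith
        · rw [heq (k + 1)]
          push_cast
          have h7 : (2 * ((k : ℝ) + 1)) / 2 ^ (s + 1) = (2 * (k : ℝ) + 2) / 2 ^ (s + 1) := by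
            ring_nf
          linarith
  · rintro ⟨k, hk, ⟨h1, h2⟩, h3, h4⟩
    rw [Finset.mem_range] at hk
    constructor
    · refine ⟨2 * k + 1, Finset.mem_Icc.mpr ⟨by omega, ?_⟩, ?_, ?_⟩
      · have : 2 ^ (s + 1) = 2 * 2 ^ s := by rw [pow_succ]; ring
        omega
      · push_cast; linarith
      · push_cast; linarith
    · rintro ⟨j, hj, hmj, hjM⟩
      rw [Finset.mem_Icc] at hj
      have e1 : (2 * k : ℝ) / 2 ^ (s + 1) < (j : ℝ) / 2 ^ s := lt_of_lt_of_le h1 hmj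
      have e2 : (j : ℝ) / 2 ^ s < (2 * k + 2 : ℝ) / 2 ^ (s + 1) := lt_of_le_of_lt hjM h4
      rw [heq j] at e1 e2
      rw [div_lt_div_iff_of_pos_right hc] at e1 e2
      have f1 : 2 * k < 2 * j := by exact_mod_cast e1
      have f2 : 2 * j < 2 * k + 2 := by exact_mod_cast e2
      omega

/-- For `X, Y` i.i.d. uniform on `[0,1]` and the dyadic grids
`G_i = {j/2^i : j = 1,…,2^i}`, the probability that `[min(X,Y), max(X,Y)]` meets `G_r`
but not `G_{r−1}` equals `2^{−r}`, for every `r ≥ 1`. -/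
theorem prob_first_dyadic_grid_hit
    {Ω : Type*} [MeasurableSpace Ω] (P : Measure Ω) [IsProbabilityMeasure P]
    (X Y : Ω → ℝ) (hX : Measurable X) (hY : Measurable Y)
    (hXunif : P.map X = volume.restrict (Set.Icc (0 : ℝ) 1))
    (hYunif : P.map Y = volume.restrict (Set.Icc (0 : ℝ) 1))
    (hindep : IndepFun X Y P)
    (r : ℕ) (hr : 1 ≤ r) :
    P {ω | (∃ j ∈ Finset.Icc (1 : ℕ) (2 ^ r),
          min (X ω) (Y ω) ≤ (j : ℝ) / 2 ^ r ∧ (j : ℝ) / 2 ^ r ≤ max (X ω) (Y ω)) ∧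
        ¬ (∃ j ∈ Finset.Icc (1 : ℕ) (2 ^ (r - 1)),
          min (X ω) (Y ω) ≤ (j : ℝ) / 2 ^ (r - 1) ∧ (j : ℝ) / 2 ^ (r - 1) ≤ max (X ω) (Y ω))} =
      (2 ^ r : ℝ≥0∞)⁻¹ := by
  obtain ⟨s, rfl⟩ : ∃ s, r = s + 1 := ⟨r - 1, (Nat.succ_pred_eq_of_pos hr).symm⟩
  simp only [Nat.add_sub_cancel]
  have hc : (0 : ℝ) < 2 ^ (s + 1) := by positivity
  set μ : Measure ℝ := volume.restrict (Set.Icc (0 : ℝ) 1) with hμdef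
  set A : ℕ → Set ℝ := fun k => Set.Ioo ((2 * k : ℝ) / 2 ^ (s + 1)) ((2 * k + 1) / 2 ^ (s + 1))
    with hA
  set B : ℕ → Set ℝ := fun k => Set.Ioo ((2 * k + 1 : ℝ) / 2 ^ (s + 1)) ((2 * k + 2) / 2 ^ (s + 1))
    with hB
  set S : Set (ℝ × ℝ) := {p | (∃ j ∈ Finset.Icc (1 : ℕ) (2 ^ (s + 1)),
        min p.1 p.2 ≤ (j : ℝ) / 2 ^ (s + 1) ∧ (j : ℝ) / 2 ^ (s + 1) ≤ max p.1 p.2) ∧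
      ¬ (∃ j ∈ Finset.Icc (1 : ℕ) (2 ^ s),
        min p.1 p.2 ≤ (j : ℝ) / 2 ^ s ∧ (j : ℝ) / 2 ^ s ≤ max p.1 p.2)} with hSdef
  have hmes : ∀ (n : ℕ) (d : ℝ), MeasurableSet {p : ℝ × ℝ | ∃ j ∈ Finset.Icc (1 : ℕ) n,
      min p.1 p.2 ≤ (j : ℝ) / d ∧ (j : ℝ) / d ≤ max p.1 p.2} := by
    intro n d
    have he : {p : ℝ × ℝ | ∃ j ∈ Finset.Icc (1 : ℕ) n,
        min p.1 p.2 ≤ (j : ℝ) / d ∧ (j : ℝ) / d ≤ max p.1 p.2}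
        = ⋃ j ∈ Finset.Icc (1 : ℕ) n,
          ({p : ℝ × ℝ | min p.1 p.2 ≤ (j : ℝ) / d} ∩ {p | (j : ℝ) / d ≤ max p.1 p.2}) := by
      ext p; simp only [Set.mem_setOf_eq, Set.mem_iUnion, Set.mem_inter_iff, Finset.mem_Icc,
        exists_prop]
    rw [he]
    exact MeasurableSet.biUnion (Finset.Icc 1 n).countable_toSet fun j _ =>
      ((measurableSet_le (measurable_fst.min measurable_snd) measurable_const).inter
       (measurableSet_le measurable_const (measurable_fst.max measurable_snd)))
  have hS : MeasurableSet S := (hmes _ _).inter (hmes _ _).compl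
  have hmap : P.map (fun ω => (X ω, Y ω)) = μ.prod μ := by
    rw [(indepFun_iff_map_prod_eq_prod_map_map hX.aemeasurable hY.aemeasurable).mp hindep,
      hXunif, hYunif]
  have hpair : Measurable fun ω => (X ω, Y ω) := hX.prodMk hY
  have h1 : P ((fun ω => (X ω, Y ω)) ⁻¹' S) = (μ.prod μ) S := by
    rw [← Measure.map_apply hpair hS, hmap]
  set ν : Measure (ℝ × ℝ) := (volume : Measure ℝ).prod volume with hν
  set Q : Set (ℝ × ℝ) := Set.Icc (0 : ℝ) 1 ×ˢ Set.Icc (0 : ℝ) 1 with hQ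
  have h2 : (μ.prod μ) S = ν (S ∩ Q) := by
    rw [hμdef, Measure.prod_restrict, Measure.restrict_apply hS]
  set D : Set ℝ := Set.range (fun j : ℕ => (j : ℝ) / 2 ^ (s + 1)) with hD
  have hDvol : volume D = 0 := (Set.countable_range _).measure_zero _
  set N : Set (ℝ × ℝ) := D ×ˢ Set.univ ∪ Set.univ ×ˢ D with hN
  have hNnull : ν N = 0 := by
    refine le_antisymm ?_ zero_le
    calc ν N ≤ ν (D ×ˢ Set.univ) + ν (Set.univ ×ˢ D) := measure_union_le _ _
      _ = 0 := by rw [Measure.prod_prod, Measure.prod_prod, hDvol]; simp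
  set U : Set (ℝ × ℝ) := ⋃ k ∈ Finset.range (2 ^ s), (A k ×ˢ B k ∪ B k ×ˢ A k) with hU
  have hUmem : ∀ (k : ℕ) (p : ℝ × ℝ), p ∈ A k ×ˢ B k ∪ B k ×ˢ A k ↔
      (min p.1 p.2 ∈ A k ∧ max p.1 p.2 ∈ B k) := by
    intro k p
    constructor
    · rintro (⟨h1', h2'⟩ | ⟨h1', h2'⟩)
      · have hlt : p.1 < p.2 := lt_trans h1'.2 h2'.1
        rw [min_eq_left hlt.le, max_eq_right hlt.le]; exact ⟨h1', h2'⟩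
      · have hlt : p.2 < p.1 := lt_trans h2'.2 h1'.1
        rw [min_eq_right hlt.le, max_eq_left hlt.le]; exact ⟨h2', h1'⟩
    · rintro ⟨h1', h2'⟩
      rcases le_total p.1 p.2 with h | h
      · rw [min_eq_left h] at h1'
        rw [max_eq_right h] at h2'
        exact Or.inl ⟨h1', h2'⟩
      · rw [min_eq_right h] at h1'
        rw [max_eq_left h] at h2'
        exact Or.inr ⟨h2', h1'⟩
  have hae : (S ∩ Q : Set (ℝ × ℝ)) =ᵐ[ν] U := by
    have hNae : ∀ᵐ p ∂ν, p ∉ N := by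
      rw [ae_iff]; simpa [not_not] using hNnull
    rw [Filter.eventuallyEq_set]
    filter_upwards [hNae] with p hp
    have hp1 : ∀ j : ℕ, p.1 ≠ (j : ℝ) / 2 ^ (s + 1) := by
      intro j hj
      exact hp (Or.inl ⟨⟨j, hj.symm⟩, trivial⟩)
    have hp2 : ∀ j : ℕ, p.2 ≠ (j : ℝ) / 2 ^ (s + 1) := by
      intro j hj
      exact hp (Or.inr ⟨trivial, ⟨j, hj.symm⟩⟩)
    constructor
    · rintro ⟨hpS, hpQ⟩
      obtain ⟨k, hk, hmm, hMM⟩ :=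
        (dyadic_key s p.1 p.2 hpQ.1.1 hpQ.1.2 hpQ.2.1 hpQ.2.2 hp1 hp2).mp hpS
      exact Set.mem_biUnion hk ((hUmem k p).mpr ⟨⟨hmm.1, hmm.2⟩, ⟨hMM.1, hMM.2⟩⟩)
    · intro hpU
      rw [hU, Set.mem_iUnion₂] at hpU
      obtain ⟨k, hk, hpk⟩ := hpU
      rw [Finset.mem_range] at hk
      obtain ⟨hmm, hMM⟩ := (hUmem k p).mp hpk
      have e0 : (0 : ℝ) ≤ (2 * k : ℝ) / 2 ^ (s + 1) := by positivity
      have e3 : (2 * k + 2 : ℝ) / 2 ^ (s + 1) ≤ 1 := by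
        rw [div_le_one hc, pow_succ]
        have : (k : ℝ) + 1 ≤ 2 ^ s := by exact_mod_cast Nat.succ_le_of_lt hk
        linarith
      have hminp : (0 : ℝ) ≤ min p.1 p.2 := le_of_lt (lt_of_le_of_lt e0 hmm.1)
      have hmaxp : max p.1 p.2 ≤ 1 := le_of_lt (lt_of_lt_of_le hMM.2 e3)
      have hpQ : p ∈ Q := by
        refine ⟨⟨le_trans hminp (min_le_left _ _), le_trans (le_max_left _ _) hmaxp⟩,
          ⟨le_trans hminp (min_le_right _ _), le_trans (le_max_right _ _) hmaxp⟩⟩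
      refine ⟨?_, hpQ⟩
      exact (dyadic_key s p.1 p.2 hpQ.1.1 hpQ.1.2 hpQ.2.1 hpQ.2.2 hp1 hp2).mpr
        ⟨k, Finset.mem_range.mpr hk, ⟨hmm.1, hmm.2⟩, ⟨hMM.1, hMM.2⟩⟩
  have h3 : ν (S ∩ Q) = ν U := measure_congr hae
  have hmesAB : ∀ k : ℕ, MeasurableSet (A k ×ˢ B k ∪ B k ×ˢ A k) := fun k =>
    (measurableSet_Ioo.prod measurableSet_Ioo).union (measurableSet_Ioo.prod measurableSet_Ioo)
  have hfst : ∀ (k : ℕ) (p : ℝ × ℝ), p ∈ A k ×ˢ B k ∪ B k ×ˢ A k →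
      (2 * k : ℝ) / 2 ^ (s + 1) < p.1 ∧ p.1 < (2 * k + 2) / 2 ^ (s + 1) := by
    intro k p hp
    rcases hp with ⟨h1', _⟩ | ⟨h1', _⟩
    · exact ⟨h1'.1, lt_trans h1'.2 ((div_lt_div_iff_of_pos_right hc).mpr (by linarith))⟩
    · exact ⟨lt_trans ((div_lt_div_iff_of_pos_right hc).mpr (by linarith)) h1'.1, h1'.2⟩
  have hdisj : (↑(Finset.range (2 ^ s)) : Set ℕ).PairwiseDisjoint
      (fun k => A k ×ˢ B k ∪ B k ×ˢ A k) := by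
    have key : ∀ k l : ℕ, k < l →
        Disjoint (A k ×ˢ B k ∪ B k ×ˢ A k) (A l ×ˢ B l ∪ B l ×ˢ A l) := by
      intro k l hlt
      rw [Set.disjoint_left]
      intro p hpk hpl
      have hk' := hfst k p hpk
      have hl' := hfst l p hpl
      have hcle : (2 * k + 2 : ℝ) / 2 ^ (s + 1) ≤ (2 * l : ℝ) / 2 ^ (s + 1) := by
        have hkl : (k : ℝ) + 1 ≤ l := by exact_mod_cast hlt
        exact div_le_div_of_nonneg_right (by linarith) hc.le
      linarith [hk'.2, hl'.1]
    intro k _ l _ hkl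
    rcases hkl.lt_or_gt with h | h
    · exact key _ _ h
    · exact (key _ _ h).symm
  have hsum : ν U = ∑ k ∈ Finset.range (2 ^ s), ν (A k ×ˢ B k ∪ B k ×ˢ A k) :=
    measure_biUnion_finset hdisj (fun k _ => hmesAB k)
  have hterm : ∀ k : ℕ, ν (A k ×ˢ B k ∪ B k ×ˢ A k)
      = ENNReal.ofReal (1 / 2 ^ (s + 1)) * ENNReal.ofReal (1 / 2 ^ (s + 1))
        + ENNReal.ofReal (1 / 2 ^ (s + 1)) * ENNReal.ofReal (1 / 2 ^ (s + 1)) := by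
    intro k
    have hd : Disjoint (A k ×ˢ B k) (B k ×ˢ A k) := by
      rw [Set.disjoint_left]
      rintro p ⟨h1', _⟩ ⟨h2', _⟩
      exact absurd h2'.1 (not_lt.mpr h1'.2.le)
    rw [measure_union hd (measurableSet_Ioo.prod measurableSet_Ioo),
      Measure.prod_prod, Measure.prod_prod, Real.volume_Ioo, Real.volume_Ioo]
    have e1 : (2 * (k : ℝ) + 1) / 2 ^ (s + 1) - (2 * k) / 2 ^ (s + 1) = 1 / 2 ^ (s + 1) := by
      ring
    have e2 : (2 * (k : ℝ) + 2) / 2 ^ (s + 1) - (2 * k + 1) / 2 ^ (s + 1) = 1 / 2 ^ (s + 1) := by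
      ring
    rw [e1, e2]
  have hofr : ENNReal.ofReal ((1 : ℝ) / 2 ^ (s + 1)) = ((2 : ℝ≥0∞) ^ (s + 1))⁻¹ := by
    rw [one_div, ENNReal.ofReal_inv_of_pos (by positivity), ENNReal.ofReal_pow (by norm_num)]
    norm_num
  have hfinal : P ((fun ω => (X ω, Y ω)) ⁻¹' S) = (2 ^ (s + 1) : ℝ≥0∞)⁻¹ := by
    rw [h1, h2, h3, hsum, Finset.sum_congr rfl (fun k _ => hterm k), Finset.sum_const,
      Finset.card_range, nsmul_eq_mul, hofr]
    push_cast
    set a : ℝ≥0∞ := 2 ^ (s + 1) with ha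
    have ha0 : a ≠ 0 := by rw [ha]; exact pow_ne_zero _ two_ne_zero
    have hat : a ≠ ⊤ := by rw [ha]; exact ENNReal.pow_ne_top ENNReal.ofNat_ne_top
    calc (2 : ℝ≥0∞) ^ s * (a⁻¹ * a⁻¹ + a⁻¹ * a⁻¹) = (2 ^ (s + 1) * a⁻¹) * a⁻¹ := by
          rw [pow_succ]; ring
      _ = (a * a⁻¹) * a⁻¹ := by rw [ha]
      _ = a⁻¹ := by rw [ENNReal.mul_inv_cancel ha0 hat, one_mul]
  exact hfinal
end
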